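/- arXiv:2109.00734 — 4 statements merged into one kernel-verified Lean document; each statement's English description precedes it below -/
import Mathlib

section
/- For every integer k ≥ 2 and every simple graph G on k vertices, either G or its complement contains a trail with k vertices. (Equivalently, the diagonal Ramsey number of trails with k vertices satisfies R(T_k, T_k) ≤ k.) -/
namespace RamseyTrail

open SimpleGraph List

variable {V : Type*}

/-- A step: move from the current anchor to target `p.1`, either directly
(`p.2 = none`) or via a connector vertex `c` (`p.2 = some c`). -/
abbrev Step (V : Type*) := V × Option V

/-- Validity of a step list: chained adjacency in `G` from `s` to `f`. -/
def Ok (G : SimpleGraph V) : V → List (Step V) → V → Prop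
  | s, [], f => s = f
  | s, (y, none) :: r, f => G.Adj s y ∧ Ok G y r f
  | s, (y, some c) :: r, f => G.Adj s c ∧ G.Adj c y ∧ Ok G y r f

/-- Edges generated by the step list starting at `s`. -/
def edgesOf : V → List (Step V) → List (Sym2 V)
  | _, [] => []
  | s, (y, none) :: r => s(s, y) :: edgesOf y r
  | s, (y, some c) :: r => s(s, c) :: s(c, y) :: edgesOf y r

/-- Connectors used by a step list. -/
def conns (l : List (Step V)) : List V := l.filterMap Prod.snd

@[simp] lemma conns_nil : conns ([] : List (Step V)) = [] := rfl
@[simp] lemma conns_cons_none (y : V) (r : List (Step V)) :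
    conns ((y, none) :: r) = conns r := rfl
@[simp] lemma conns_cons_some (y c : V) (r : List (Step V)) :
    conns ((y, some c) :: r) = c :: conns r := rfl

/-- Direct ("none") edges generated by the step list starting at `s`. -/
def nonesE : V → List (Step V) → List (Sym2 V)
  | _, [] => []
  | s, (y, none) :: r => s(s, y) :: nonesE y r
  | _, (y, some _) :: r => nonesE y r

/-- Final anchor of a step list starting at `s`. -/
def aEnd : V → List (Step V) → V
  | s, [] => s
  | _, (y, _) :: r => aEnd y r

/-- Consecutive anchors are distinct. -/
def stepsDistinct : V → List (Step V) → Prop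
  | _, [] => True
  | s, (y, _) :: r => s ≠ y ∧ stepsDistinct y r

variable {G : SimpleGraph V}

/-- Build the walk from a valid step list. -/
def buildWalk : ∀ (s f : V) (l : List (Step V)), Ok G s l f → G.Walk s f
  | _, _, [], h => (Walk.nil).copy h.symm rfl
  | _, f, (y, none) :: r, h => Walk.cons h.1 (buildWalk y f r h.2)
  | _, f, (y, some _) :: r, h =>
      Walk.cons h.1 (Walk.cons h.2.1 (buildWalk y f r h.2.2))

lemma edges_buildWalk : ∀ (s f : V) (l : List (Step V)) (h : Ok G s l f),
    (buildWalk s f l h).edges = edgesOf s l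
  | _, _, [], h => by simp [buildWalk, edgesOf]
  | s, f, (y, none) :: r, h => by
      simp [buildWalk, edgesOf, edges_buildWalk y f r h.2]
  | s, f, (y, some c) :: r, h => by
      simp [buildWalk, edgesOf, edges_buildWalk y f r h.2.2]

@[simp] lemma aEnd_cons (s y : V) (o : Option V) (r : List (Step V)) :
    aEnd s ((y, o) :: r) = aEnd y r := rfl

lemma ok_aEnd : ∀ (s f : V) (l : List (Step V)), Ok G s l f → aEnd s l = f
  | s, f, [], h => h
  | s, f, (y, none) :: r, h => ok_aEnd y f r h.2
  | s, f, (y, some c) :: r, h => ok_aEnd y f r h.2.2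

lemma ok_append {s m f : V} {l1 l2 : List (Step V)} (h1 : Ok G s l1 m)
    (h2 : Ok G m l2 f) : Ok G s (l1 ++ l2) f := by
  induction l1 generalizing s with
  | nil => cases h1; exact h2
  | cons p r ih =>
      obtain ⟨y, o⟩ := p
      cases o with
      | none => exact ⟨h1.1, ih h1.2⟩
      | some c => exact ⟨h1.1, h1.2.1, ih h1.2.2⟩

lemma edgesOf_append (s : V) (l1 l2 : List (Step V)) :
    edgesOf s (l1 ++ l2) = edgesOf s l1 ++ edgesOf (aEnd s l1) l2 := by
  induction l1 generalizing s with
  | nil => simp [edgesOf, aEnd]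
  | cons p r ih =>
      obtain ⟨y, o⟩ := p
      cases o <;> simp [edgesOf, ih y]

lemma nonesE_append (s : V) (l1 l2 : List (Step V)) :
    nonesE s (l1 ++ l2) = nonesE s l1 ++ nonesE (aEnd s l1) l2 := by
  induction l1 generalizing s with
  | nil => simp [nonesE, aEnd]
  | cons p r ih =>
      obtain ⟨y, o⟩ := p
      cases o <;> simp [nonesE, ih y]

lemma conns_append (l1 l2 : List (Step V)) :
    conns (l1 ++ l2) = conns l1 ++ conns l2 := by
  simp [conns]

lemma stepsDistinct_append {s : V} {l1 l2 : List (Step V)}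
    (h1 : stepsDistinct s l1) (h2 : stepsDistinct (aEnd s l1) l2) :
    stepsDistinct s (l1 ++ l2) := by
  induction l1 generalizing s with
  | nil => exact h2
  | cons p r ih =>
      obtain ⟨y, o⟩ := p
      exact ⟨h1.1, ih h1.2 h2⟩

lemma length_edgesOf (s : V) (l : List (Step V)) :
    (edgesOf s l).length = l.length + (conns l).length := by
  induction l generalizing s with
  | nil => simp [edgesOf]
  | cons p r ih =>
      obtain ⟨y, o⟩ := p
      cases o <;> simp [edgesOf, ih y] <;> omega

lemma length_buildWalk (s f : V) (l : List (Step V)) (h : Ok G s l f) :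
    (buildWalk s f l h).length = l.length + (conns l).length := by
  rw [← Walk.length_edges, edges_buildWalk, length_edgesOf]

lemma mem_conns {l : List (Step V)} {c : V} :
    c ∈ conns l ↔ ∃ p ∈ l, p.2 = some c := by
  simp [conns, List.mem_filterMap]

lemma mem_edgesOf : ∀ (s : V) (l : List (Step V)) (e : Sym2 V),
    e ∈ edgesOf s l → (∃ c ∈ conns l, c ∈ e) ∨ e ∈ nonesE s l
  | s, [], e => by simp [edgesOf]
  | s, (y, none) :: r, e => by
      intro h
      rw [edgesOf, List.mem_cons] at h
      rcases h with h | h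
      · right; rw [nonesE, List.mem_cons]; exact Or.inl h
      · rcases mem_edgesOf y r e h with ⟨c, hc, hce⟩ | h
        · exact Or.inl ⟨c, by simpa using hc, hce⟩
        · right; rw [nonesE, List.mem_cons]; exact Or.inr h
  | s, (y, some c) :: r, e => by
      intro h
      rw [edgesOf, List.mem_cons, List.mem_cons] at h
      rcases h with h | h | h
      · subst h; exact Or.inl ⟨c, by simp, by simp⟩
      · subst h; exact Or.inl ⟨c, by simp, by simp⟩
      · rcases mem_edgesOf y r e h with ⟨c', hc', hce⟩ | h
        · exact Or.inl ⟨c', by simp [hc'], hce⟩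
        · right; rwa [nonesE]

lemma mem_nonesE (Z : Set V) : ∀ (s : V) (l : List (Step V)),
    s ∈ Z → (∀ p ∈ l, p.1 ∈ Z) → ∀ e ∈ nonesE s l, ∀ x ∈ e, x ∈ Z
  | s, [], hs, hl => by simp [nonesE]
  | s, (y, none) :: r, hs, hl => by
      have hy : y ∈ Z := hl (y, none) (by simp)
      intro e he
      rw [nonesE, List.mem_cons] at he
      rcases he with rfl | he
      · intro x hx
        rcases Sym2.mem_iff.mp hx with rfl | rfl
        · exact hs
        · exact hy
      · exact mem_nonesE Z y r hy (fun p hp => hl p (by simp [hp])) e he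
  | s, (y, some c) :: r, hs, hl => by
      have hy : y ∈ Z := hl (y, some c) (by simp)
      intro e he
      rw [nonesE] at he
      exact mem_nonesE Z y r hy (fun p hp => hl p (by simp [hp])) e he

/-- Master nodup lemma for the generated edge list. -/
lemma nodup_edgesOf (Z : Set V) : ∀ (s : V) (l : List (Step V)),
    s ∈ Z → (∀ p ∈ l, p.1 ∈ Z) → (∀ p ∈ l, ∀ c, p.2 = some c → c ∉ Z) →
    (conns l).Nodup → (nonesE s l).Nodup → stepsDistinct s l →
    (edgesOf s l).Nodup
  | s, [], _, _, _, _, _, _ => by simp [edgesOf]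
  | s, (y, none) :: r, hs, hanc, hcon, hcn, hnn, hsd => by
      have hy : y ∈ Z := hanc (y, none) (by simp)
      have hanc' : ∀ p ∈ r, p.1 ∈ Z := fun p hp => hanc p (by simp [hp])
      rw [nonesE, List.nodup_cons] at hnn
      have ih := nodup_edgesOf Z y r hy hanc'
        (fun p hp => hcon p (by simp [hp])) (by simpa using hcn)
        hnn.2 hsd.2
      rw [edgesOf, List.nodup_cons]
      refine ⟨?_, ih⟩
      intro hmem
      rcases mem_edgesOf y r _ hmem with ⟨c, hc, hce⟩ | h
      · rcases mem_conns.mp hc with ⟨p, hp, hpc⟩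
        have hcZ : c ∉ Z := hcon p (by simp [hp]) c hpc
        rcases Sym2.mem_iff.mp hce with rfl | rfl
        · exact hcZ hs
        · exact hcZ hy
      · exact hnn.1 h
  | s, (y, some c) :: r, hs, hanc, hcon, hcn, hnn, hsd => by
      have hy : y ∈ Z := hanc (y, some c) (by simp)
      have hcZ : c ∉ Z := hcon (y, some c) (by simp) c rfl
      have hanc' : ∀ p ∈ r, p.1 ∈ Z := fun p hp => hanc p (by simp [hp])
      rw [conns_cons_some, List.nodup_cons] at hcn
      rw [nonesE] at hnn
      have ih := nodup_edgesOf Z y r hy hanc'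
        (fun p hp => hcon p (by simp [hp])) hcn.2 hnn hsd.2
      have hsne : s ≠ y := hsd.1
      have key : ∀ x : V, x ∈ Z → s(x, c) ∉ edgesOf y r := by
        intro x hxZ hmem
        rcases mem_edgesOf y r _ hmem with ⟨c', hc', hce⟩ | h
        · rcases mem_conns.mp hc' with ⟨p, hp, hpc⟩
          have hc'Z : c' ∉ Z := hcon p (by simp [hp]) c' hpc
          rcases Sym2.mem_iff.mp hce with rfl | rfl
          · exact hc'Z hxZ
          · exact hcn.1 hc'
        · exact hcZ (mem_nonesE Z y r hy hanc' _ h c (by simp))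
      rw [edgesOf, List.nodup_cons, List.nodup_cons]
      refine ⟨?_, ?_, ih⟩
      · rw [List.mem_cons]
        rintro (h | h)
        · rw [Sym2.eq_iff] at h
          rcases h with ⟨rfl, rfl⟩ | ⟨rfl, h2⟩
          · exact hcZ hs
          · exact hsne rfl
        · exact key s hs h
      · intro h
        rw [Sym2.eq_swap] at h
        exact key y hy h

end RamseyTrail
namespace RamseyTrail

open SimpleGraph List

variable {V : Type*}

/-! ### Zigzag -/

/-- Zigzag steps between `x` and `y`, consuming labels `L`. -/
def zig : V → V → List (Option V) → List (Step V)
  | _, _, [] => []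
  | x, y, o :: L => (y, o) :: zig y x L

/-- End of a zigzag. -/
def zend (x y : V) (L : List (Option V)) : V := if Even L.length then x else y

lemma zend_cons (x y : V) (o : Option V) (L : List (Option V)) :
    zend x y (o :: L) = zend y x L := by
  simp only [zend, List.length_cons, Nat.even_add_one]
  by_cases h : Even L.length <;> simp [h]

variable {G : SimpleGraph V}

lemma ok_zig : ∀ (x y : V) (L : List (Option V)),
    (∀ c, some c ∈ L → G.Adj x c ∧ G.Adj y c) →
    (none ∈ L → G.Adj x y) → Ok G x (zig x y L) (zend x y L)
  | x, y, [], _, _ => by simp [zig, zend, Ok]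
  | x, y, none :: L, hc, hn => by
      rw [zend_cons]
      exact ⟨hn (by simp), ok_zig y x L
        (fun c hc' => (hc c (by simp [hc'])).symm.imp id id)
        (fun h => (hn (by simp [h])).symm)⟩
  | x, y, some c :: L, hc, hn => by
      rw [zend_cons]
      exact ⟨(hc c (by simp)).1, ((hc c (by simp)).2).symm, ok_zig y x L
        (fun c' hc' => (hc c' (by simp [hc'])).symm.imp id id)
        (fun h => (hn (by simp [h])).symm)⟩

lemma conns_zig : ∀ (x y : V) (L : List (Option V)),
    conns (zig x y L) = L.filterMap id
  | _, _, [] => rfl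
  | x, y, none :: L => by simp [zig, conns_zig y x L]
  | x, y, some c :: L => by simp [zig, conns_zig y x L]

lemma fst_mem_zig : ∀ (x y : V) (L : List (Option V)) (p : Step V),
    p ∈ zig x y L → p.1 = x ∨ p.1 = y
  | _, _, [], p => by simp [zig]
  | x, y, o :: L, p => by
      intro h
      rw [zig, List.mem_cons] at h
      rcases h with rfl | h
      · simp
      · exact (fst_mem_zig y x L p h).symm

lemma stepsDistinct_zig : ∀ (x y : V) (L : List (Option V)), x ≠ y →
    stepsDistinct x (zig x y L)
  | _, _, [], _ => trivial
  | x, y, o :: L, h => ⟨h, stepsDistinct_zig y x L h.symm⟩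

lemma length_zig : ∀ (x y : V) (L : List (Option V)),
    (zig x y L).length = L.length
  | _, _, [] => rfl
  | x, y, o :: L => by simp [zig, length_zig y x L]

lemma aEnd_zig (x y : V) (L : List (Option V)) :
    aEnd x (zig x y L) = zend x y L := by
  induction L generalizing x y with
  | nil => simp [zig, aEnd, zend]
  | cons o L ih => rw [zig, aEnd_cons, ih y x, zend_cons]

/-! ### Triangles -/

/-- Triangle rounds from `z1`: each round `(oc, oa, ob)` walks
`z1 →(oc) z2 →(oa) z3 →(ob) z1`. -/
def tri (z1 z2 z3 : V) : List (Option V × Option V × Option V) → List (Step V)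
  | [] => []
  | (oc, oa, ob) :: T => (z2, oc) :: (z3, oa) :: (z1, ob) :: tri z1 z2 z3 T

variable {z1 z2 z3 : V}

lemma ok_tri (T : List (Option V × Option V × Option V))
    (hc : ∀ c, some c ∈ T.map (·.1) → G.Adj z1 c ∧ G.Adj z2 c)
    (ha : ∀ c, some c ∈ T.map (·.2.1) → G.Adj z2 c ∧ G.Adj z3 c)
    (hb : ∀ c, some c ∈ T.map (·.2.2) → G.Adj z3 c ∧ G.Adj z1 c)
    (hcn : none ∈ T.map (·.1) → G.Adj z1 z2)
    (han : none ∈ T.map (·.2.1) → G.Adj z2 z3)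
    (hbn : none ∈ T.map (·.2.2) → G.Adj z3 z1) :
    Ok G z1 (tri z1 z2 z3 T) z1 := by
  induction T with
  | nil => rfl
  | cons t T ih =>
      obtain ⟨oc, oa, ob⟩ := t
      have ih' : Ok G z1 (tri z1 z2 z3 T) z1 :=
        ih (fun c h => hc c (by simp [h])) (fun c h => ha c (by simp [h]))
          (fun c h => hb c (by simp [h])) (fun h => hcn (by simp [h]))
          (fun h => han (by simp [h])) (fun h => hbn (by simp [h]))
      have s1 : Ok G z1 [(z2, oc)] z2 := by
        rcases oc with _ | c
        · exact ⟨hcn (by simp), rfl⟩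
        · exact ⟨(hc c (by simp)).1, (hc c (by simp)).2.symm, rfl⟩
      have s2 : Ok G z2 [(z3, oa)] z3 := by
        rcases oa with _ | c
        · exact ⟨han (by simp), rfl⟩
        · exact ⟨(ha c (by simp)).1, (ha c (by simp)).2.symm, rfl⟩
      have s3 : Ok G z3 [(z1, ob)] z1 := by
        rcases ob with _ | c
        · exact ⟨hbn (by simp), rfl⟩
        · exact ⟨(hb c (by simp)).1, (hb c (by simp)).2.symm, rfl⟩
      exact ok_append (l1 := [(z2, oc)]) s1
        (ok_append (l1 := [(z3, oa)]) s2 (ok_append (l1 := [(z1, ob)]) s3 ih'))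

lemma fst_mem_tri : ∀ (T : List (Option V × Option V × Option V)) (p : Step V),
    p ∈ tri z1 z2 z3 T → p.1 = z1 ∨ p.1 = z2 ∨ p.1 = z3
  | [], p => by simp [tri]
  | (oc, oa, ob) :: T, p => by
      intro h
      rw [tri, List.mem_cons, List.mem_cons, List.mem_cons] at h
      rcases h with rfl | rfl | rfl | h
      · simp
      · simp
      · simp
      · exact fst_mem_tri T p h

lemma stepsDistinct_tri (h12 : z1 ≠ z2) (h13 : z1 ≠ z3) (h23 : z2 ≠ z3) :
    ∀ (T : List (Option V × Option V × Option V)),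
      stepsDistinct z1 (tri z1 z2 z3 T)
  | [] => trivial
  | (oc, oa, ob) :: T =>
      ⟨h12, h23, fun h => h13 h.symm, stepsDistinct_tri h12 h13 h23 T⟩

lemma length_tri : ∀ (T : List (Option V × Option V × Option V)),
    (tri z1 z2 z3 T).length = 3 * T.length
  | [] => rfl
  | t :: T => by obtain ⟨oc, oa, ob⟩ := t; simp [tri, length_tri T]; omega

lemma aEnd_tri : ∀ (T : List (Option V × Option V × Option V)),
    aEnd z1 (tri z1 z2 z3 T) = z1
  | [] => rfl
  | (oc, oa, ob) :: T => aEnd_tri T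

variable [DecidableEq V]

lemma nonesE_zig : ∀ (x y : V) (L : List (Option V)),
    nonesE x (zig x y L) = List.replicate (L.count none) s(x, y)
  | _, _, [] => by simp [zig, nonesE]
  | x, y, none :: L => by
      rw [zig, nonesE, nonesE_zig y x L,
        show s(y, x) = s(x, y) from Sym2.eq_swap]
      simp [List.count_cons, List.replicate_succ]
  | x, y, some c :: L => by
      rw [zig, nonesE, nonesE_zig y x L,
        show s(y, x) = s(x, y) from Sym2.eq_swap]
      simp [List.count_cons]

lemma count_conns_zig (x y : V) (L : List (Option V)) (v : V) :
    (conns (zig x y L)).count v = L.count (some v) := by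
  rw [conns_zig]
  induction L with
  | nil => rfl
  | cons o L ih =>
      rcases o with _ | c <;> simp [List.count_cons] at ih ⊢ <;> omega

lemma count_conns_tri : ∀ (T : List (Option V × Option V × Option V)) (x : V),
    (conns (tri z1 z2 z3 T)).count x =
      (T.map (·.1)).count (some x) + (T.map (·.2.1)).count (some x)
        + (T.map (·.2.2)).count (some x)
  | [], x => rfl
  | (oc, oa, ob) :: T, x => by
      have ih := count_conns_tri T x
      rcases oc with _ | c <;> rcases oa with _ | a <;> rcases ob with _ | b <;>
        simp [tri, List.count_cons, ih] <;> omega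

lemma length_conns_tri : ∀ (T : List (Option V × Option V × Option V)),
    (conns (tri z1 z2 z3 T)).length =
      ((T.map (·.1)).filterMap id).length
        + ((T.map (·.2.1)).filterMap id).length
        + ((T.map (·.2.2)).filterMap id).length
  | [] => rfl
  | (oc, oa, ob) :: T => by
      have ih := length_conns_tri T
      rcases oc with _ | c <;> rcases oa with _ | a <;> rcases ob with _ | b <;>
        simp [tri, ih] <;> omega

lemma count_nonesE_tri (h12 : z1 ≠ z2) (h13 : z1 ≠ z3) (h23 : z2 ≠ z3)
    (T : List (Option V × Option V × Option V)) (e : Sym2 V) :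
    (nonesE z1 (tri z1 z2 z3 T)).count e =
      (T.map (·.1)).count none * (if e = s(z1, z2) then 1 else 0)
      + (T.map (·.2.1)).count none * (if e = s(z2, z3) then 1 else 0)
      + (T.map (·.2.2)).count none * (if e = s(z3, z1) then 1 else 0) := by
  have d1 : s(z1, z2) ≠ s(z2, z3) := by
    rw [Ne, Sym2.eq_iff]
    rintro (⟨h, -⟩ | ⟨h, -⟩)
    exacts [h12 h, h13 h]
  have d2 : s(z1, z2) ≠ s(z3, z1) := by
    rw [Ne, Sym2.eq_iff]
    rintro (⟨h, -⟩ | ⟨-, h⟩)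
    exacts [h13 h, h23 h]
  have d3 : s(z2, z3) ≠ s(z3, z1) := by
    rw [Ne, Sym2.eq_iff]
    rintro (⟨h, -⟩ | ⟨h, -⟩)
    exacts [h23 h, h12 h.symm]
  induction T with
  | nil => simp [tri, nonesE]
  | cons t T ih =>
      obtain ⟨oc, oa, ob⟩ := t
      rcases oc with _ | c <;> rcases oa with _ | a <;> rcases ob with _ | b <;>
        simp only [tri, nonesE, List.map_cons, List.count_cons, ih,
          beq_iff_eq] <;>
        by_cases h1 : e = s(z1, z2) <;> by_cases h2 : e = s(z2, z3) <;>
        by_cases h3 : e = s(z3, z1) <;>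
        first
          | exact absurd (h1.symm.trans h2) d1
          | exact absurd (h1.symm.trans h3) d2
          | exact absurd (h2.symm.trans h3) d3
          | (simp only [if_pos h1, if_pos h1.symm, if_neg h2,
              if_neg (Ne.symm h2), if_neg h3, if_neg (Ne.symm h3)]; simp; try omega)
          | (simp only [if_neg h1, if_neg (Ne.symm h1), if_pos h2,
              if_pos h2.symm, if_neg h3, if_neg (Ne.symm h3)]; simp; try omega)
          | (simp only [if_neg h1, if_neg (Ne.symm h1), if_neg h2,
              if_neg (Ne.symm h2), if_pos h3, if_pos h3.symm]; simp; try omega)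
          | (simp only [if_neg h1, if_neg (Ne.symm h1), if_neg h2,
              if_neg (Ne.symm h2), if_neg h3, if_neg (Ne.symm h3)]; simp; try omega)

end RamseyTrail
namespace RamseyTrail

open SimpleGraph List

variable {V : Type*} [DecidableEq V] {H : SimpleGraph V}

lemma count_take_drop (L : List (Option V)) (m : ℕ) (o : Option V) :
    (L.take m).count o + (L.drop m).count o = L.count o := by
  rw [← List.count_append, List.take_append_drop]

/-- Core construction: an Euler trail through all the multigraph edges,
assuming the `a`-bundle is smallest. -/
lemma core (z1 z2 z3 : V) (h12 : z1 ≠ z2) (h13 : z1 ≠ z3) (h23 : z2 ≠ z3)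
    (La Lb Lc : List (Option V))
    (hA : ∀ c, some c ∈ La →
      H.Adj z2 c ∧ H.Adj z3 c ∧ c ≠ z1 ∧ c ≠ z2 ∧ c ≠ z3)
    (hB : ∀ c, some c ∈ Lb →
      H.Adj z1 c ∧ H.Adj z3 c ∧ c ≠ z1 ∧ c ≠ z2 ∧ c ≠ z3)
    (hC : ∀ c, some c ∈ Lc →
      H.Adj z1 c ∧ H.Adj z2 c ∧ c ≠ z1 ∧ c ≠ z2 ∧ c ≠ z3)
    (hAn : none ∈ La → H.Adj z2 z3) (hBn : none ∈ Lb → H.Adj z1 z3)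
    (hCn : none ∈ Lc → H.Adj z1 z2)
    (hA1 : La.count none ≤ 1) (hB1 : Lb.count none ≤ 1)
    (hC1 : Lc.count none ≤ 1)
    (hcc : ∀ x : V, La.count (some x) + Lb.count (some x)
      + Lc.count (some x) ≤ 1)
    (hm1 : La.length ≤ Lb.length) (hm2 : La.length ≤ Lc.length) :
    ∃ (u v : V) (p : H.Walk u v), p.IsTrail ∧
      p.length = La.length + Lb.length + Lc.length
        + ((La.filterMap id).length + (Lb.filterMap id).length
          + (Lc.filterMap id).length) := by
  classical
  set m := La.length with hm
  set Lc1 : List (Option V) := Lc.drop m with hLc1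
  set Lc2 : List (Option V) := Lc.take m with hLc2
  set Lb1 : List (Option V) := Lb.drop m with hLb1
  set Lb2 : List (Option V) := Lb.take m with hLb2
  have hLc2len : Lc2.length = m := by simp [hLc2, hm2]
  have hLb2len : Lb2.length = m := by simp [hLb2, hm1]
  set T : List (Option V × Option V × Option V) := Lc2.zip (La.zip Lb2)
    with hT
  have hTlen : T.length = m := by
    simp [hT, List.length_zip, hLc2len, hLb2len]; omega
  have hT1 : T.map (·.1) = Lc2 := by
    rw [hT]
    exact List.map_fst_zip (by simp [List.length_zip, hLc2len, hLb2len]; omega)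
  have hT2s : T.map (·.2) = La.zip Lb2 := by
    rw [hT]
    exact List.map_snd_zip (by simp [List.length_zip, hLc2len, hLb2len])
  have hT2 : T.map (·.2.1) = La := by
    have : T.map (·.2.1) = (T.map (·.2)).map (·.1) := by
      rw [List.map_map]; rfl
    rw [this, hT2s]
    exact List.map_fst_zip (by simp [hLb2len]; omega)
  have hT3 : T.map (·.2.2) = Lb2 := by
    have : T.map (·.2.2) = (T.map (·.2)).map (·.2) := by
      rw [List.map_map]; rfl
    rw [this, hT2s]
    exact List.map_snd_zip (by simp [hLb2len]; omega)
  -- membership transfer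
  have hCmem : ∀ o ∈ Lc1, o ∈ Lc := fun o ho => by
    rw [hLc1] at ho; exact List.mem_of_mem_drop ho
  have hCmem2 : ∀ o ∈ Lc2, o ∈ Lc := fun o ho => by
    rw [hLc2] at ho; exact List.mem_of_mem_take ho
  have hBmem : ∀ o ∈ Lb1, o ∈ Lb := fun o ho => by
    rw [hLb1] at ho; exact List.mem_of_mem_drop ho
  have hBmem2 : ∀ o ∈ Lb2, o ∈ Lb := fun o ho => by
    rw [hLb2] at ho; exact List.mem_of_mem_take ho
  -- the starting corner of the first zigzag
  set P : V × V := if Even Lc1.length then (z1, z2) else (z2, z1) with hP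
  set x0 := P.1 with hx0
  set y0 := P.2 with hy0
  have hor : (x0 = z1 ∧ y0 = z2) ∨ (x0 = z2 ∧ y0 = z1) := by
    rw [hx0, hy0, hP]
    by_cases h : Even Lc1.length <;> simp [h]
  have hend : zend x0 y0 Lc1 = z1 := by
    rw [hx0, hy0, hP]
    by_cases h : Even Lc1.length <;> simp [zend, h]
  have hxyne : x0 ≠ y0 := by
    rcases hor with ⟨h1, h2⟩ | ⟨h1, h2⟩ <;> rw [h1, h2]
    exacts [h12, h12.symm]
  have hxy : s(x0, y0) = s(z1, z2) := by
    rcases hor with ⟨h1, h2⟩ | ⟨h1, h2⟩ <;> rw [h1, h2]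
    exact Sym2.eq_swap
  have hzC : ∀ c, some c ∈ Lc1 → H.Adj x0 c ∧ H.Adj y0 c := by
    intro c hc
    have := hC c (hCmem _ hc)
    rcases hor with ⟨h1, h2⟩ | ⟨h1, h2⟩ <;> rw [h1, h2]
    exacts [⟨this.1, this.2.1⟩, ⟨this.2.1, this.1⟩]
  have hzCn : none ∈ Lc1 → H.Adj x0 y0 := by
    intro hc
    have := hCn (hCmem _ hc)
    rcases hor with ⟨h1, h2⟩ | ⟨h1, h2⟩ <;> rw [h1, h2]
    exacts [this, this.symm]
  -- the three phases
  set l1 : List (Step V) := zig x0 y0 Lc1 with hl1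
  set l2 : List (Step V) := tri z1 z2 z3 T with hl2
  set l3 : List (Step V) := zig z1 z3 Lb1 with hl3
  set steps : List (Step V) := l1 ++ (l2 ++ l3) with hsteps
  have ok1 : Ok H x0 l1 z1 := by
    rw [hl1, ← hend]; exact ok_zig x0 y0 Lc1 hzC hzCn
  have ok2 : Ok H z1 l2 z1 := by
    rw [hl2]
    refine ok_tri T ?_ ?_ ?_ ?_ ?_ ?_
    · rw [hT1]; intro c hc
      have := hC c (hCmem2 _ hc); exact ⟨this.1, this.2.1⟩
    · rw [hT2]; intro c hc
      have := hA c hc; exact ⟨this.1, this.2.1⟩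
    · rw [hT3]; intro c hc
      have := hB c (hBmem2 _ hc); exact ⟨this.2.1, this.1⟩
    · rw [hT1]; intro hc; exact hCn (hCmem2 _ hc)
    · rw [hT2]; intro hc; exact hAn hc
    · rw [hT3]; intro hc; exact (hBn (hBmem2 _ hc)).symm
  have ok3 : Ok H z1 l3 (zend z1 z3 Lb1) := by
    rw [hl3]
    refine ok_zig z1 z3 Lb1 ?_ ?_
    · intro c hc
      have := hB c (hBmem _ hc); exact ⟨this.1, this.2.1⟩
    · intro hc; exact hBn (hBmem _ hc)
  have okAll : Ok H x0 steps (zend z1 z3 Lb1) :=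
    ok_append ok1 (ok_append ok2 ok3)
  refine ⟨x0, zend z1 z3 Lb1, buildWalk _ _ steps okAll, ?_, ?_⟩
  · -- IsTrail
    rw [Walk.isTrail_def, edges_buildWalk]
    have haE1 : aEnd x0 l1 = z1 := ok_aEnd _ _ _ ok1
    have haE2 : aEnd z1 l2 = z1 := ok_aEnd _ _ _ ok2
    refine nodup_edgesOf ({z1, z2, z3} : Set V) x0 steps ?_ ?_ ?_ ?_ ?_ ?_
    · rcases hor with ⟨h1, -⟩ | ⟨h1, -⟩ <;> rw [h1] <;> simp
    · intro p hp
      rw [hsteps] at hp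
      rcases List.mem_append.mp hp with hp | hp
      · rcases fst_mem_zig _ _ _ _ hp with h | h <;>
          rcases hor with ⟨h1, h2⟩ | ⟨h1, h2⟩ <;> rw [h] <;>
          simp [h1, h2]
      · rcases List.mem_append.mp hp with hp | hp
        · rcases fst_mem_tri _ _ hp with h | h | h <;> rw [h] <;> simp
        · rcases fst_mem_zig _ _ _ _ hp with h | h <;> rw [h] <;> simp
    · -- connectors not centers
      intro p hp c hpc
      have hcc' : c ∈ conns steps := mem_conns.mpr ⟨p, hp, hpc⟩
      have : some c ∈ La ∨ some c ∈ Lb ∨ some c ∈ Lc := by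
        rw [hsteps, conns_append, conns_append] at hcc'
        rcases List.mem_append.mp hcc' with h | h
        · rw [hl1, conns_zig] at h
          rcases List.mem_filterMap.mp h with ⟨o, ho, he⟩
          right; right; cases he; exact hCmem _ ho
        · rcases List.mem_append.mp h with h | h
          · rw [hl2] at h
            have hpos := List.count_pos_iff.mpr h
            rw [count_conns_tri] at hpos
            rw [hT1, hT2, hT3] at hpos
            have : 0 < Lc2.count (some c) ∨ 0 < La.count (some c)
                ∨ 0 < Lb2.count (some c) := by omega
            rcases this with h' | h' | h'
            · right; right; exact hCmem2 _ (List.count_pos_iff.mp h')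
            · left; exact List.count_pos_iff.mp h'
            · right; left; exact hBmem2 _ (List.count_pos_iff.mp h')
          · rw [hl3, conns_zig] at h
            rcases List.mem_filterMap.mp h with ⟨o, ho, he⟩
            right; left; cases he; exact hBmem _ ho
      rcases this with h | h | h
      · have := hA c h
        simp only [Set.mem_insert_iff, Set.mem_singleton_iff]
        push_neg
        exact ⟨this.2.2.1, this.2.2.2.1, this.2.2.2.2⟩
      · have := hB c h
        simp only [Set.mem_insert_iff, Set.mem_singleton_iff]
        push_neg
        exact ⟨this.2.2.1, this.2.2.2.1, this.2.2.2.2⟩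
      · have := hC c h
        simp only [Set.mem_insert_iff, Set.mem_singleton_iff]
        push_neg
        exact ⟨this.2.2.1, this.2.2.2.1, this.2.2.2.2⟩
    · -- conns nodup
      rw [List.nodup_iff_count_le_one]
      intro x
      rw [hsteps, conns_append, conns_append, List.count_append,
        List.count_append, hl1, hl2, hl3, count_conns_zig,
        count_conns_tri, hT1, hT2, hT3, count_conns_zig]
      have e1 := count_take_drop Lc m (some x)
      have e2 := count_take_drop Lb m (some x)
      have := hcc x
      rw [← hLc1, ← hLc2] at e1
      rw [← hLb1, ← hLb2] at e2
      omega
    · -- nonesE nodup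
      rw [List.nodup_iff_count_le_one]
      intro e
      rw [hsteps, nonesE_append, nonesE_append, List.count_append,
        List.count_append]
      have haE1' : aEnd x0 l1 = z1 := haE1
      rw [haE1', haE2, hl1, hl2, hl3, nonesE_zig, nonesE_zig, hxy,
        count_nonesE_tri h12 h13 h23, hT1, hT2, hT3,
        List.count_replicate, List.count_replicate]
      have e1 := count_take_drop Lc m (none : Option V)
      have e2 := count_take_drop Lb m (none : Option V)
      rw [← hLc1, ← hLc2] at e1
      rw [← hLb1, ← hLb2] at e2
      have d1 : s(z1, z2) ≠ s(z2, z3) := by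
        rw [Ne, Sym2.eq_iff]
        rintro (⟨h, -⟩ | ⟨h, -⟩)
        exacts [h12 h, h13 h]
      have d2 : s(z1, z2) ≠ s(z3, z1) := by
        rw [Ne, Sym2.eq_iff]
        rintro (⟨h, -⟩ | ⟨-, h⟩)
        exacts [h13 h, h23 h]
      have d3 : s(z2, z3) ≠ s(z3, z1) := by
        rw [Ne, Sym2.eq_iff]
        rintro (⟨h, -⟩ | ⟨h, -⟩)
        exacts [h23 h, h12 h.symm]
      have dz : s(z1, z3) = s(z3, z1) := Sym2.eq_swap
      by_cases h1 : e = s(z1, z2) <;> by_cases h2 : e = s(z2, z3) <;>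
        by_cases h3 : e = s(z3, z1) <;>
        first
          | exact absurd (h1.symm.trans h2) d1
          | exact absurd (h1.symm.trans h3) d2
          | exact absurd (h2.symm.trans h3) d3
          | (simp only [dz, beq_iff_eq, if_pos h1.symm, if_pos h1,
              if_neg (Ne.symm h2), if_neg h2, if_neg (Ne.symm h3), if_neg h3]
             omega)
          | (simp only [dz, beq_iff_eq, if_neg (Ne.symm h1), if_neg h1,
              if_pos h2.symm, if_pos h2, if_neg (Ne.symm h3), if_neg h3]
             omega)
          | (simp only [dz, beq_iff_eq, if_neg (Ne.symm h1), if_neg h1,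
              if_neg (Ne.symm h2), if_neg h2, if_pos h3.symm, if_pos h3]
             omega)
          | (simp only [dz, beq_iff_eq, if_neg (Ne.symm h1), if_neg h1,
              if_neg (Ne.symm h2), if_neg h2, if_neg (Ne.symm h3), if_neg h3]
             omega)
    · -- stepsDistinct
      refine stepsDistinct_append (stepsDistinct_zig _ _ _ hxyne) ?_
      rw [hl1, aEnd_zig, hend]
      refine stepsDistinct_append (stepsDistinct_tri h12 h13 h23 T) ?_
      rw [hl2, aEnd_tri]
      exact stepsDistinct_zig _ _ _ h13
  · -- length
    rw [length_buildWalk]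
    rw [hsteps, List.length_append, List.length_append, conns_append,
      conns_append, List.length_append, List.length_append,
      hl1, hl2, hl3, length_zig, length_tri, length_zig,
      conns_zig, conns_zig, length_conns_tri, hT1, hT2, hT3, hTlen]
    have c1 : Lc.length = Lc2.length + Lc1.length := by
      rw [hLc1, hLc2]; rw [← List.length_append, List.take_append_drop]
    have b1 : Lb.length = Lb2.length + Lb1.length := by
      rw [hLb1, hLb2]; rw [← List.length_append, List.take_append_drop]
    have c2 : (Lc.filterMap id).length
        = (Lc2.filterMap id).length + (Lc1.filterMap id).length := by
      rw [hLc1, hLc2, ← List.length_append, ← List.filterMap_append,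
        List.take_append_drop]
    have b2 : (Lb.filterMap id).length
        = (Lb2.filterMap id).length + (Lb1.filterMap id).length := by
      rw [hLb1, hLb2, ← List.length_append, ← List.filterMap_append,
        List.take_append_drop]
    have : Lc1.length = Lc.length - m := by rw [hLc1]; simp
    have : Lb1.length = Lb.length - m := by rw [hLb1]; simp
    omega

end RamseyTrail
namespace RamseyTrail

open SimpleGraph List

variable {V : Type*} [DecidableEq V] {H : SimpleGraph V}

/-- The Euler-trail construction, without the minimality assumption. -/
lemma main_construct (z1 z2 z3 : V) (h12 : z1 ≠ z2) (h13 : z1 ≠ z3)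
    (h23 : z2 ≠ z3) (La Lb Lc : List (Option V))
    (hA : ∀ c, some c ∈ La →
      H.Adj z2 c ∧ H.Adj z3 c ∧ c ≠ z1 ∧ c ≠ z2 ∧ c ≠ z3)
    (hB : ∀ c, some c ∈ Lb →
      H.Adj z1 c ∧ H.Adj z3 c ∧ c ≠ z1 ∧ c ≠ z2 ∧ c ≠ z3)
    (hC : ∀ c, some c ∈ Lc →
      H.Adj z1 c ∧ H.Adj z2 c ∧ c ≠ z1 ∧ c ≠ z2 ∧ c ≠ z3)
    (hAn : none ∈ La → H.Adj z2 z3) (hBn : none ∈ Lb → H.Adj z1 z3)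
    (hCn : none ∈ Lc → H.Adj z1 z2)
    (hA1 : La.count none ≤ 1) (hB1 : Lb.count none ≤ 1)
    (hC1 : Lc.count none ≤ 1)
    (hcc : ∀ x : V, La.count (some x) + Lb.count (some x)
      + Lc.count (some x) ≤ 1) :
    ∃ (u v : V) (p : H.Walk u v), p.IsTrail ∧
      p.length = La.length + Lb.length + Lc.length
        + ((La.filterMap id).length + (Lb.filterMap id).length
          + (Lc.filterMap id).length) := by
  by_cases hab : La.length ≤ Lb.length
  · by_cases hac : La.length ≤ Lc.length
    · exact core z1 z2 z3 h12 h13 h23 La Lb Lc hA hB hC hAn hBn hCn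
        hA1 hB1 hC1 hcc hab hac
    · -- Lc is smallest : roles (z3, z1, z2), A' = Lc, B' = La, C' = Lb
      obtain ⟨u, v, p, hp, hlen⟩ :=
        core z3 z1 z2 h13.symm h23.symm h12 Lc La Lb
          (fun c hc => let h := hC c hc;
            ⟨h.1, h.2.1, h.2.2.2.2, h.2.2.1, h.2.2.2.1⟩)
          (fun c hc => let h := hA c hc;
            ⟨h.2.1, h.1, h.2.2.2.2, h.2.2.1, h.2.2.2.1⟩)
          (fun c hc => let h := hB c hc;
            ⟨h.2.1, h.1, h.2.2.2.2, h.2.2.1, h.2.2.2.1⟩)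
          (fun h => hCn h) (fun h => (hAn h).symm) (fun h => (hBn h).symm)
          hC1 hA1 hB1 (fun x => by have := hcc x; omega)
          (by omega) (by omega)
      exact ⟨u, v, p, hp, by rw [hlen]; ring⟩
  · by_cases hbc : Lb.length ≤ Lc.length
    · -- Lb smallest : roles (z2, z3, z1), A' = Lb, B' = Lc, C' = La
      obtain ⟨u, v, p, hp, hlen⟩ :=
        core z2 z3 z1 h23 h12.symm h13.symm Lb Lc La
          (fun c hc => let h := hB c hc;
            ⟨h.2.1, h.1, h.2.2.2.1, h.2.2.2.2, h.2.2.1⟩)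
          (fun c hc => let h := hC c hc;
            ⟨h.2.1, h.1, h.2.2.2.1, h.2.2.2.2, h.2.2.1⟩)
          (fun c hc => let h := hA c hc;
            ⟨h.1, h.2.1, h.2.2.2.1, h.2.2.2.2, h.2.2.1⟩)
          (fun h => (hBn h).symm) (fun h => (hCn h).symm) (fun h => hAn h)
          hB1 hC1 hA1 (fun x => by have := hcc x; omega)
          hbc (by omega)
      exact ⟨u, v, p, hp, by rw [hlen]; ring⟩
    · -- Lc smallest
      obtain ⟨u, v, p, hp, hlen⟩ :=
        core z3 z1 z2 h13.symm h23.symm h12 Lc La Lb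
          (fun c hc => let h := hC c hc;
            ⟨h.1, h.2.1, h.2.2.2.2, h.2.2.1, h.2.2.2.1⟩)
          (fun c hc => let h := hA c hc;
            ⟨h.2.1, h.1, h.2.2.2.2, h.2.2.1, h.2.2.2.1⟩)
          (fun c hc => let h := hB c hc;
            ⟨h.2.1, h.1, h.2.2.2.2, h.2.2.1, h.2.2.2.1⟩)
          (fun h => hCn h) (fun h => (hAn h).symm) (fun h => (hBn h).symm)
          hC1 hA1 hB1 (fun x => by have := hcc x; omega)
          (by omega) (by omega)
      exact ⟨u, v, p, hp, by rw [hlen]; ring⟩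

/-- Truncating a trail. -/
lemma trail_take : ∀ {u v : V} (p : H.Walk u v) (n : ℕ), p.IsTrail →
    n ≤ p.length → ∃ (w : V) (q : H.Walk u w), q.IsTrail ∧ q.length = n ∧
      ∀ e ∈ q.edges, e ∈ p.edges := by
  intro u v p
  induction p with
  | nil =>
      intro n _ hn
      simp only [Walk.length_nil, Nat.le_zero] at hn
      subst hn
      exact ⟨_, Walk.nil, by simp, by simp, by simp⟩
  | @cons a b c hadj p ih =>
      intro n hp hn
      match n with
      | 0 => exact ⟨a, Walk.nil, by simp, by simp, by simp⟩
      | Nat.succ n =>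
          rw [Walk.isTrail_def, Walk.edges_cons, List.nodup_cons] at hp
          obtain ⟨w, q, hq, hql, hqs⟩ := ih n ((Walk.isTrail_def _).mpr hp.2)
            (by simpa using hn)
          refine ⟨w, Walk.cons hadj q, ?_, by simp [hql], ?_⟩
          · rw [Walk.isTrail_def, Walk.edges_cons, List.nodup_cons]
            exact ⟨fun hmem => hp.1 (hqs _ hmem), hq.edges_nodup⟩
          · intro e he
            rw [Walk.edges_cons, List.mem_cons] at he
            rcases he with rfl | he
            · simp
            · simp [hqs e he]

end RamseyTrail
namespace RamseyTrail

open SimpleGraph List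

variable {V : Type*} [DecidableEq V]

/-- One-color trail construction from connector finsets. -/
lemma color_construct (H : SimpleGraph V) (z1 z2 z3 : V) (h12 : z1 ≠ z2)
    (h13 : z1 ≠ z3) (h23 : z2 ≠ z3) (A B C : Finset V)
    (hA : ∀ c ∈ A, H.Adj z2 c ∧ H.Adj z3 c ∧ c ≠ z1 ∧ c ≠ z2 ∧ c ≠ z3)
    (hB : ∀ c ∈ B, H.Adj z1 c ∧ H.Adj z3 c ∧ c ≠ z1 ∧ c ≠ z2 ∧ c ≠ z3)
    (hC : ∀ c ∈ C, H.Adj z1 c ∧ H.Adj z2 c ∧ c ≠ z1 ∧ c ≠ z2 ∧ c ≠ z3)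
    (hAB : ∀ c, ¬(c ∈ A ∧ c ∈ B)) (hAC : ∀ c, ¬(c ∈ A ∧ c ∈ C))
    (hBC : ∀ c, ¬(c ∈ B ∧ c ∈ C))
    (da db dc : Prop) [Decidable da] [Decidable db] [Decidable dc]
    (hda : da → H.Adj z2 z3) (hdb : db → H.Adj z1 z3)
    (hdc : dc → H.Adj z1 z2) :
    ∃ (u v : V) (p : H.Walk u v), p.IsTrail ∧
      p.length = 2 * (A.card + B.card + C.card)
        + ((if da then 1 else 0) + (if db then 1 else 0)
          + (if dc then 1 else 0)) := by
  classical
  set La : List (Option V) :=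
    A.toList.map some ++ (if da then [none] else []) with hLa
  set Lb : List (Option V) :=
    B.toList.map some ++ (if db then [none] else []) with hLb
  set Lc : List (Option V) :=
    C.toList.map some ++ (if dc then [none] else []) with hLc
  have memsome : ∀ (t : Finset V) (d : Prop) (_ : Decidable d) (c : V),
      some c ∈ t.toList.map some ++ (if d then [none] else []) → c ∈ t := by
    intro t d hd c hmem
    rcases List.mem_append.mp hmem with h | h
    · rcases List.mem_map.mp h with ⟨x, hx, he⟩
      cases he
      exact Finset.mem_toList.mp hx
    · split at h <;> simp_all
  have memnone : ∀ (t : Finset V) (d : Prop) (_ : Decidable d),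
      none ∈ t.toList.map some ++ (if d then [none] else []) → d := by
    intro t d hd hmem
    rcases List.mem_append.mp hmem with h | h
    · simp at h
    · split at h
      · assumption
      · simp at h
  have cntnone : ∀ (t : Finset V) (d : Prop) (_ : Decidable d),
      (t.toList.map some ++ (if d then [none] else [])).count none
        = (if d then 1 else 0) := by
    intro t d hd
    rw [List.count_append]
    rw [List.count_eq_zero_of_not_mem (by simp)]
    split <;> simp
  have cntsome : ∀ (t : Finset V) (d : Prop) (_ : Decidable d) (x : V),
      (t.toList.map some ++ (if d then [none] else [])).count (some x)
        = (if x ∈ t then 1 else 0) := by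
    intro t d hd x
    rw [List.count_append]
    have h2 : (if d then [none] else [] : List (Option V)).count (some x)
        = 0 := by split <;> simp
    rw [h2]
    by_cases hx : x ∈ t
    · rw [if_pos hx]
      have h1 : ∀ (l : List V), (l.map some).count (some x) = l.count x := by
        intro l
        induction l with
        | nil => rfl
        | cons a l ih => simp [List.count_cons, ih]
      rw [h1]
      have := List.nodup_iff_count_le_one.mp t.nodup_toList x
      have hmem : x ∈ t.toList := Finset.mem_toList.mpr hx
      have := List.count_pos_iff.mpr hmem
      omega
    · rw [if_neg hx, Nat.add_zero, List.count_eq_zero_of_not_mem]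
      simp [Finset.mem_toList, hx]
  have lenlist : ∀ (t : Finset V) (d : Prop) (_ : Decidable d),
      (t.toList.map some ++ (if d then [none] else [])).length
        = t.card + (if d then 1 else 0) := by
    intro t d hd
    rw [List.length_append, List.length_map, Finset.length_toList]
    split <;> simp
  have lenfm : ∀ (t : Finset V) (d : Prop) (_ : Decidable d),
      ((t.toList.map some ++ (if d then [none] else [])).filterMap id).length
        = t.card := by
    intro t d hd
    rw [List.filterMap_append, List.filterMap_map]
    have : (id ∘ some : V → Option V) = some := rfl
    rw [this, List.filterMap_some]
    have : ((if d then [none] else [] : List (Option V)).filterMap id) = [] := by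
      split <;> simp
    rw [this, List.length_append, List.length_nil, Finset.length_toList]
    omega
  obtain ⟨u, v, p, hp, hlen⟩ :=
    main_construct (H := H) z1 z2 z3 h12 h13 h23 La Lb Lc
      (fun c hc => hA c (memsome _ _ _ _ hc))
      (fun c hc => hB c (memsome _ _ _ _ hc))
      (fun c hc => hC c (memsome _ _ _ _ hc))
      (fun h => hda (memnone _ _ _ h))
      (fun h => hdb (memnone _ _ _ h))
      (fun h => hdc (memnone _ _ _ h))
      (by rw [hLa, cntnone]; split <;> omega)
      (by rw [hLb, cntnone]; split <;> omega)
      (by rw [hLc, cntnone]; split <;> omega)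
      (by
        intro x
        rw [hLa, hLb, hLc, cntsome, cntsome, cntsome]
        by_cases h1 : x ∈ A
        · rw [if_pos h1, if_neg (fun h2 => hAB x ⟨h1, h2⟩),
            if_neg (fun h3 => hAC x ⟨h1, h3⟩)]
        · rw [if_neg h1]
          by_cases h2 : x ∈ B
          · rw [if_pos h2, if_neg (fun h3 => hBC x ⟨h2, h3⟩)]
          · rw [if_neg h2]
            split <;> omega)
  refine ⟨u, v, p, hp, ?_⟩
  rw [hlen, hLa, hLb, hLc, lenlist, lenlist, lenlist, lenfm, lenfm, lenfm]
  ring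

end RamseyTrail
/-- A graph `G` contains a trail with `k` vertices (counted with multiplicity),
i.e., a walk of length `k - 1` whose edges are pairwise distinct. -/
def HasTrailWithVertices {V : Type*} (G : SimpleGraph V) (k : ℕ) : Prop :=
  ∃ (u v : V) (p : G.Walk u v), p.IsTrail ∧ p.length + 1 = k

set_option maxHeartbeats 1000000

open SimpleGraph List RamseyTrail in
/-- For every integer `k ≥ 2` and every simple graph `G` on `k` vertices,
either `G` or its complement contains a trail with `k` vertices. -/
theorem ramsey_trail_upper_bound (k : ℕ) (hk : 2 ≤ k) (G : SimpleGraph (Fin k)) :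
    HasTrailWithVertices G k ∨ HasTrailWithVertices Gᶜ k := by
  classical
  rw [HasTrailWithVertices, HasTrailWithVertices]
  by_cases h3 : 3 ≤ k
  swap
  · -- k = 2
    have hk2 : k = 2 := by omega
    subst hk2
    have hab : (⟨0, by omega⟩ : Fin 2) ≠ ⟨1, by omega⟩ := by
      simp [Fin.ext_iff]
    by_cases hadj : G.Adj ⟨0, by omega⟩ ⟨1, by omega⟩
    · exact Or.inl ⟨_, _, Walk.cons hadj Walk.nil, by simp, by simp⟩
    · exact Or.inr ⟨_, _,
        Walk.cons ((G.compl_adj _ _).mpr ⟨hab, hadj⟩) Walk.nil,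
        by simp, by simp⟩
  · -- k ≥ 3
    set z1 : Fin k := ⟨0, by omega⟩ with hz1
    set z2 : Fin k := ⟨1, by omega⟩ with hz2
    set z3 : Fin k := ⟨2, by omega⟩ with hz3
    have h12 : z1 ≠ z2 := by simp [hz1, hz2, Fin.ext_iff]
    have h13 : z1 ≠ z3 := by simp [hz1, hz3, Fin.ext_iff]
    have h23 : z2 ≠ z3 := by simp [hz2, hz3, Fin.ext_iff]
    set s : Finset (Fin k) := Finset.univ \ {z1, z2, z3} with hs
    have hscard : s.card = k - 3 := by
      rw [hs, Finset.card_sdiff_of_subset (Finset.subset_univ _)]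
      have hc3 : ({z1, z2, z3} : Finset (Fin k)).card = 3 := by
        rw [Finset.card_insert_of_notMem (by simp [h12, h13]),
          Finset.card_insert_of_notMem (by simp [h23]),
          Finset.card_singleton]
      rw [hc3, Finset.card_univ, Fintype.card_fin]
    have hsne : ∀ c ∈ s, c ≠ z1 ∧ c ≠ z2 ∧ c ≠ z3 := by
      intro c hc
      rw [hs, Finset.mem_sdiff] at hc
      simp only [Finset.mem_insert, Finset.mem_singleton] at hc
      push_neg at hc
      exact hc.2
    set Q12 : Fin k → Prop := fun c => (G.Adj z1 c ↔ G.Adj z2 c) with hQ12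
    set R13 : Fin k → Prop := fun c => (G.Adj z1 c ↔ G.Adj z3 c) with hR13
    set AR := s.filter (fun c => (¬Q12 c ∧ ¬R13 c) ∧ G.Adj z2 c) with hAR
    set ABl := s.filter (fun c => (¬Q12 c ∧ ¬R13 c) ∧ ¬G.Adj z2 c) with hABl
    set BR := s.filter (fun c => (¬Q12 c ∧ R13 c) ∧ G.Adj z1 c) with hBR
    set BBl := s.filter (fun c => (¬Q12 c ∧ R13 c) ∧ ¬G.Adj z1 c) with hBBl
    set CR := s.filter (fun c => Q12 c ∧ G.Adj z1 c) with hCR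
    set CBl := s.filter (fun c => Q12 c ∧ ¬G.Adj z1 c) with hCBl
    -- the red trail
    obtain ⟨uR, vR, pR, hpR, hlenR⟩ :=
      color_construct G z1 z2 z3 h12 h13 h23 AR BR CR
        (by
          intro c hc
          rw [hAR, Finset.mem_filter] at hc
          obtain ⟨hcs, ⟨hq, hr⟩, ha2⟩ := hc
          have ha3 : G.Adj z3 c := by
            rw [hQ12] at hq; rw [hR13] at hr; tauto
          exact ⟨ha2, ha3, hsne c hcs⟩)
        (by
          intro c hc
          rw [hBR, Finset.mem_filter] at hc
          obtain ⟨hcs, ⟨hq, hr⟩, ha1⟩ := hc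
          have ha3 : G.Adj z3 c := by rw [hR13] at hr; tauto
          exact ⟨ha1, ha3, hsne c hcs⟩)
        (by
          intro c hc
          rw [hCR, Finset.mem_filter] at hc
          obtain ⟨hcs, hq, ha1⟩ := hc
          have ha2 : G.Adj z2 c := by rw [hQ12] at hq; tauto
          exact ⟨ha1, ha2, hsne c hcs⟩)
        (by
          rintro c ⟨hc1, hc2⟩
          rw [hAR, Finset.mem_filter] at hc1
          rw [hBR, Finset.mem_filter] at hc2
          tauto)
        (by
          rintro c ⟨hc1, hc2⟩
          rw [hAR, Finset.mem_filter] at hc1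
          rw [hCR, Finset.mem_filter] at hc2
          tauto)
        (by
          rintro c ⟨hc1, hc2⟩
          rw [hBR, Finset.mem_filter] at hc1
          rw [hCR, Finset.mem_filter] at hc2
          tauto)
        (G.Adj z2 z3) (G.Adj z1 z3) (G.Adj z1 z2) id id id
    -- the blue trail
    obtain ⟨uB, vB, pB, hpB, hlenB⟩ :=
      color_construct Gᶜ z1 z2 z3 h12 h13 h23 ABl BBl CBl
        (by
          intro c hc
          rw [hABl, Finset.mem_filter] at hc
          obtain ⟨hcs, ⟨hq, hr⟩, ha2⟩ := hc
          obtain ⟨ne1, ne2, ne3⟩ := hsne c hcs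
          have ha3 : ¬G.Adj z3 c := by
            rw [hQ12] at hq; rw [hR13] at hr; tauto
          exact ⟨(Gᶜ.adj_comm _ _).mp ((G.compl_adj c z2).mpr ⟨ne2, fun h => ha2 h.symm⟩),
            (Gᶜ.adj_comm _ _).mp ((G.compl_adj c z3).mpr ⟨ne3, fun h => ha3 h.symm⟩),
            ne1, ne2, ne3⟩)
        (by
          intro c hc
          rw [hBBl, Finset.mem_filter] at hc
          obtain ⟨hcs, ⟨hq, hr⟩, ha1⟩ := hc
          obtain ⟨ne1, ne2, ne3⟩ := hsne c hcs
          have ha3 : ¬G.Adj z3 c := by rw [hR13] at hr; tauto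
          exact ⟨(Gᶜ.adj_comm _ _).mp ((G.compl_adj c z1).mpr ⟨ne1, fun h => ha1 h.symm⟩),
            (Gᶜ.adj_comm _ _).mp ((G.compl_adj c z3).mpr ⟨ne3, fun h => ha3 h.symm⟩),
            ne1, ne2, ne3⟩)
        (by
          intro c hc
          rw [hCBl, Finset.mem_filter] at hc
          obtain ⟨hcs, hq, ha1⟩ := hc
          obtain ⟨ne1, ne2, ne3⟩ := hsne c hcs
          have ha2 : ¬G.Adj z2 c := by rw [hQ12] at hq; tauto
          exact ⟨(Gᶜ.adj_comm _ _).mp ((G.compl_adj c z1).mpr ⟨ne1, fun h => ha1 h.symm⟩),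
            (Gᶜ.adj_comm _ _).mp ((G.compl_adj c z2).mpr ⟨ne2, fun h => ha2 h.symm⟩),
            ne1, ne2, ne3⟩)
        (by
          rintro c ⟨hc1, hc2⟩
          rw [hABl, Finset.mem_filter] at hc1
          rw [hBBl, Finset.mem_filter] at hc2
          tauto)
        (by
          rintro c ⟨hc1, hc2⟩
          rw [hABl, Finset.mem_filter] at hc1
          rw [hCBl, Finset.mem_filter] at hc2
          tauto)
        (by
          rintro c ⟨hc1, hc2⟩
          rw [hBBl, Finset.mem_filter] at hc1
          rw [hCBl, Finset.mem_filter] at hc2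
          tauto)
        (¬G.Adj z2 z3) (¬G.Adj z1 z3) (¬G.Adj z1 z2)
        (fun h => (G.compl_adj z2 z3).mpr ⟨h23, h⟩)
        (fun h => (G.compl_adj z1 z3).mpr ⟨h13, h⟩)
        (fun h => (G.compl_adj z1 z2).mpr ⟨h12, h⟩)
    -- counting
    have cardA : AR.card + ABl.card
        = (s.filter (fun c => ¬Q12 c ∧ ¬R13 c)).card := by
      rw [hAR, hABl]
      have h := Finset.card_filter_add_card_filter_not
        (s := s.filter (fun c => ¬Q12 c ∧ ¬R13 c)) (p := fun c => G.Adj z2 c)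
      rw [Finset.filter_filter, Finset.filter_filter] at h
      exact h
    have cardB : BR.card + BBl.card
        = (s.filter (fun c => ¬Q12 c ∧ R13 c)).card := by
      rw [hBR, hBBl]
      have h := Finset.card_filter_add_card_filter_not
        (s := s.filter (fun c => ¬Q12 c ∧ R13 c)) (p := fun c => G.Adj z1 c)
      rw [Finset.filter_filter, Finset.filter_filter] at h
      exact h
    have cardC : CR.card + CBl.card = (s.filter Q12).card := by
      rw [hCR, hCBl]
      have h := Finset.card_filter_add_card_filter_not
        (s := s.filter Q12) (p := fun c => G.Adj z1 c)
      rw [Finset.filter_filter, Finset.filter_filter] at h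
      exact h
    have cardQ : (s.filter (fun c => ¬Q12 c ∧ R13 c)).card
        + (s.filter (fun c => ¬Q12 c ∧ ¬R13 c)).card
        = (s.filter (fun c => ¬Q12 c)).card := by
      have h := Finset.card_filter_add_card_filter_not
        (s := s.filter (fun c => ¬Q12 c)) (p := R13)
      rw [Finset.filter_filter, Finset.filter_filter] at h
      exact h
    have cardQ2 : (s.filter Q12).card + (s.filter (fun c => ¬Q12 c)).card
        = s.card := Finset.card_filter_add_card_filter_not _
    have hsum : pR.length + pB.length = 2 * (k - 3) + 3 := by
      rw [hlenR, hlenB]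
      have i1 : (if G.Adj z2 z3 then 1 else 0)
          + (if ¬G.Adj z2 z3 then 1 else 0) = 1 := by
        by_cases h : G.Adj z2 z3 <;> simp [h]
      have i2 : (if G.Adj z1 z3 then 1 else 0)
          + (if ¬G.Adj z1 z3 then 1 else 0) = 1 := by
        by_cases h : G.Adj z1 z3 <;> simp [h]
      have i3 : (if G.Adj z1 z2 then 1 else 0)
          + (if ¬G.Adj z1 z2 then 1 else 0) = 1 := by
        by_cases h : G.Adj z1 z2 <;> simp [h]
      omega
    -- one of the two trails is long enough
    have hlong : k - 1 ≤ pR.length ∨ k - 1 ≤ pB.length := by omega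
    rcases hlong with hl | hl
    · obtain ⟨w, q, hq, hql, -⟩ := trail_take pR (k - 1) hpR hl
      exact Or.inl ⟨uR, w, q, hq, by omega⟩
    · obtain ⟨w, q, hq, hql, -⟩ := trail_take pB (k - 1) hpB hl
      exact Or.inr ⟨uB, w, q, hq, by omega⟩
end

section
/- For every integer k ≥ 7 and every natural number n with n < (1 + √(16k − 7))/2, there exists a simple graph G on n vertices such that neither G nor its complement contains a trail with k vertices. (Equivalently, R(T_k, T_k) ≥ ⌈(1 + √(16k − 7))/2⌉ for k ≥ 7.) -/
set_option maxHeartbeats 1600000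

section Aux

open Finset


lemma sum_countP_mem {V : Type*} [Fintype V] [DecidableEq V] (l : List (Sym2 V))
    (hl : ∀ e ∈ l, ¬ e.IsDiag) :
    ∑ x : V, l.countP (fun e => x ∈ e) = 2 * l.length := by
  induction l with
  | nil => simp
  | cons e l ih =>
    have hd := hl e (List.mem_cons_self)
    have ih' := ih (fun e he => hl e (List.mem_cons_of_mem _ he))
    simp only [List.countP_cons]
    rw [Finset.sum_add_distrib, ih']
    have h2 : ∑ x : V, (if (decide (x ∈ e)) = true then 1 else 0) = 2 := by
      obtain ⟨a, b⟩ := e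
      have hab : a ≠ b := by simpa using hd
      have : (univ.filter fun x => decide (x ∈ s(a,b)) = true) = {a, b} := by
        ext x; simp [Sym2.mem_iff]
      rw [Finset.sum_boole, this, Finset.card_pair hab]; norm_num
    rw [h2, List.length_cons]; ring

lemma trail_degree_sum {V : Type*} [Fintype V] [DecidableEq V] (H : SimpleGraph V)
    [DecidableRel H.Adj] {u v : V} (p : H.Walk u v) (hp : p.IsTrail) (s : Finset V)
    (hs : ∀ x ∈ s, Odd (H.degree x)) :
    2 * p.length + s.card ≤ (∑ x, H.degree x) + 2 := by
  classical
  set c : V → ℕ := fun x => p.edges.countP (fun e => x ∈ e) with hc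
  have hsum : ∑ x, c x = 2 * p.length := by
    rw [← p.length_edges]
    exact sum_countP_mem _ (fun e he => (H.not_isDiag_of_mem_edgeSet (p.edges_subset_edgeSet he)))
  have hle : ∀ x, c x ≤ H.degree x := by
    intro x
    have h1 : c x = (p.edges.filter (fun e => x ∈ e)).length := List.countP_eq_length_filter
    have hnd : (p.edges.filter (fun e => x ∈ e)).Nodup := hp.edges_nodup.filter _
    have h2 : (p.edges.filter (fun e => x ∈ e)).toFinset ⊆ H.incidenceFinset x := by
      intro e he
      simp only [List.mem_toFinset, List.mem_filter] at he
      rw [SimpleGraph.mem_incidenceFinset]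
      exact ⟨p.edges_subset_edgeSet he.1, by simpa using he.2⟩
    calc c x = (p.edges.filter (fun e => x ∈ e)).toFinset.card := by
              rw [h1, List.toFinset_card_of_nodup hnd]
      _ ≤ (H.incidenceFinset x).card := Finset.card_le_card h2
      _ = H.degree x := H.card_incidenceFinset_eq_degree x
  set s' : Finset V := s \ {u, v} with hs'
  have heven : ∀ x ∈ s', Even (c x) := by
    intro x hx
    simp only [hs', Finset.mem_sdiff, Finset.mem_insert, Finset.mem_singleton, not_or] at hx
    rw [hc]
    exact (hp.even_countP_edges_iff x).2 (fun _ => ⟨hx.2.1, hx.2.2⟩)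
  have hstep : ∀ x, c x + (if x ∈ s' then 1 else 0) ≤ H.degree x := by
    intro x
    by_cases hx : x ∈ s'
    · simp only [hx, if_true]
      have hodd := hs x (Finset.mem_sdiff.1 hx).1
      have hev := heven x hx
      have := hle x
      rcases lt_or_eq_of_le this with h | h
      · omega
      · exfalso; rw [h] at hev; exact (Nat.not_even_iff_odd.2 hodd) hev
    · simpa [hx] using hle x
  have hbig : ∑ x, c x + s'.card ≤ ∑ x, H.degree x := by
    calc ∑ x, c x + s'.card = ∑ x, (c x + if x ∈ s' then 1 else 0) := by
          rw [Finset.sum_add_distrib, Finset.sum_ite_mem]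
          simp
      _ ≤ ∑ x, H.degree x := Finset.sum_le_sum (fun x _ => hstep x)
  have hcard : s.card ≤ s'.card + 2 := by
    have := Finset.le_card_sdiff ({u, v} : Finset V) s
    rw [← hs'] at this
    have h2 : ({u, v} : Finset V).card ≤ 2 := Finset.card_insert_le _ _ |>.trans (by simp)
    omega
  omega

lemma degree_eq_of_nbhd {n : ℕ} (G : SimpleGraph (Fin n)) [DecidableRel G.Adj] (v : Fin n)
    (t : Finset ℕ) (h : ∀ x : ℕ, (∃ j : Fin n, G.Adj v j ∧ j.val = x) ↔ x ∈ t) :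
    G.degree v = t.card := by
  have h1 : G.degree v = (Finset.univ.filter (G.Adj v)).card := by
    rw [← SimpleGraph.neighborFinset_eq_filter]; rfl
  rw [h1]
  refine Finset.card_bij (fun j _ => j.val) ?_ ?_ ?_
  · intro a ha
    simp only [Finset.mem_filter, Finset.mem_univ, true_and] at ha
    exact (h a.val).1 ⟨a, ha, rfl⟩
  · intro a _ b _ hab; exact Fin.val_injective hab
  · intro x hx
    obtain ⟨j, hj, rfl⟩ := (h x).2 hx
    exact ⟨j, by simp only [Finset.mem_filter, Finset.mem_univ, true_and]; exact hj, rfl⟩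

/-- two cliques of size n/2 plus a perfect cross matching -/
def GA (n : ℕ) : SimpleGraph (Fin n) where
  Adj i j := ¬ (i.val = j.val) ∧
    ((i.val < n/2 ∧ j.val < n/2) ∨
     (n/2 ≤ i.val ∧ i.val < 2*(n/2) ∧ n/2 ≤ j.val ∧ j.val < 2*(n/2)) ∨
     (i.val < n/2 ∧ j.val = i.val + n/2) ∨
     (j.val < n/2 ∧ i.val = j.val + n/2))
  symm := by constructor; rintro i j ⟨h1, h2⟩; refine ⟨fun h => h1 h.symm, by tauto⟩
  loopless := by constructor; rintro i ⟨h1, _⟩; exact h1 rfl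

instance GA_dec (n : ℕ) : DecidableRel (GA n).Adj := fun i j => by
  change Decidable (_ ∧ _); infer_instance

lemma GA_adj {n : ℕ} (i j : Fin n) : (GA n).Adj i j ↔
    (¬ (i.val = j.val) ∧
    ((i.val < n/2 ∧ j.val < n/2) ∨
     (n/2 ≤ i.val ∧ i.val < 2*(n/2) ∧ n/2 ≤ j.val ∧ j.val < 2*(n/2)) ∨
     (i.val < n/2 ∧ j.val = i.val + n/2) ∨
     (j.val < n/2 ∧ i.val = j.val + n/2))) := Iff.rfl

lemma GA_degree {n : ℕ} (v : Fin n) :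
    (GA n).degree v = if v.val < 2*(n/2) then n/2 else 0 := by
  have hv := v.isLt
  rcases lt_or_ge v.val (n/2) with hv1 | hv1
  · rw [degree_eq_of_nbhd (GA n) v (insert (v.val + n/2) ((Finset.range (n/2)).erase v.val)) ?_]
    · rw [Finset.card_insert_of_notMem (by simp only [Finset.mem_erase, Finset.mem_range]; omega),
        Finset.card_erase_of_mem (by simp only [Finset.mem_range]; omega), Finset.card_range,
        if_pos (by omega)]
      omega
    · intro x
      simp only [Finset.mem_insert, Finset.mem_erase, Finset.mem_range]
      constructor
      · rintro ⟨j, hj, rfl⟩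
        rw [GA_adj] at hj
        omega
      · intro hx
        refine ⟨⟨x, by omega⟩, ?_, rfl⟩
        rw [GA_adj]
        simp only [Fin.val_mk]
        omega
  · rcases lt_or_ge v.val (2*(n/2)) with hv2 | hv2
    · rw [degree_eq_of_nbhd (GA n) v
        (insert (v.val - n/2) ((Finset.Ico (n/2) (2*(n/2))).erase v.val)) ?_]
      · rw [Finset.card_insert_of_notMem (by simp only [Finset.mem_erase, Finset.mem_Ico]; omega),
          Finset.card_erase_of_mem (by simp only [Finset.mem_Ico]; omega), Nat.card_Ico,
          if_pos (by omega)]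
        omega
      · intro x
        simp only [Finset.mem_insert, Finset.mem_erase, Finset.mem_Ico]
        constructor
        · rintro ⟨j, hj, rfl⟩
          rw [GA_adj] at hj
          omega
        · intro hx
          refine ⟨⟨x, by omega⟩, ?_, rfl⟩
          rw [GA_adj]
          simp only [Fin.val_mk]
          omega
    · rw [degree_eq_of_nbhd (GA n) v (∅ : Finset ℕ) ?_, Finset.card_empty, if_neg (by omega)]
      intro x
      simp only [Finset.notMem_empty, iff_false, not_exists]
      intro j ⟨hj, hjx⟩
      rw [GA_adj] at hj
      omega
/-- cross-cycle edges used in `GB` -/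
def crossB (n : ℕ) (a b : ℕ) : Prop :=
  (a < n/4 ∧ b = n/2 + a) ∨ (1 ≤ a ∧ a < n/4 ∧ b = n/2 + a - 1) ∨
  (a = 0 ∧ 1 ≤ n/4 ∧ b = n/2 + n/4 - 1)

instance crossB_dec (n a b : ℕ) : Decidable (crossB n a b) := by unfold crossB; infer_instance

/-- two cliques of size n/2 plus a cross cycle on the first n/4 vertices of each -/
def GB (n : ℕ) : SimpleGraph (Fin n) where
  Adj i j := ¬ (i.val = j.val) ∧
    ((i.val < n/2 ∧ j.val < n/2) ∨
     (n/2 ≤ i.val ∧ i.val < 2*(n/2) ∧ n/2 ≤ j.val ∧ j.val < 2*(n/2)) ∨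
     crossB n i.val j.val ∨ crossB n j.val i.val)
  symm := by constructor; rintro i j ⟨h1, h2⟩; refine ⟨fun h => h1 h.symm, by tauto⟩
  loopless := by constructor; rintro i ⟨h1, _⟩; exact h1 rfl

instance GB_dec (n : ℕ) : DecidableRel (GB n).Adj := fun i j => by
  change Decidable (_ ∧ _); infer_instance

lemma GB_adj (i j : Fin n) : (GB n).Adj i j ↔
    (¬ (i.val = j.val) ∧
    ((i.val < n/2 ∧ j.val < n/2) ∨
     (n/2 ≤ i.val ∧ i.val < 2*(n/2) ∧ n/2 ≤ j.val ∧ j.val < 2*(n/2)) ∨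
     crossB n i.val j.val ∨ crossB n j.val i.val)) := Iff.rfl

lemma GB_degree (hm : n/2 = 2*(n/4)) (hh : 2 ≤ n/4) (v : Fin n) :
    (GB n).degree v = if v.val < n/4 then n/2+1 else if v.val < n/2 then n/2-1
      else if v.val < n/2 + n/4 then n/2+1 else if v.val < 2*(n/2) then n/2-1 else 0 := by
  have hv := v.isLt
  have hcard2 : ∀ a b : ℕ, a ∉ (Finset.range (n/2)).erase v.val →
      b ∉ (Finset.range (n/2)).erase v.val → a ≠ b → v.val < n/2 →
      (insert a (insert b ((Finset.range (n/2)).erase v.val))).card = n/2 + 1 := by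
    intro a b ha hb hab hvm
    rw [Finset.card_insert_of_notMem (by simp only [Finset.mem_insert]; tauto),
      Finset.card_insert_of_notMem hb,
      Finset.card_erase_of_mem (by simp only [Finset.mem_range]; omega), Finset.card_range]
    omega
  have hcard2' : ∀ a b : ℕ, a ∉ (Finset.Ico (n/2) (2*(n/2))).erase v.val →
      b ∉ (Finset.Ico (n/2) (2*(n/2))).erase v.val → a ≠ b →
      n/2 ≤ v.val → v.val < 2*(n/2) →
      (insert a (insert b ((Finset.Ico (n/2) (2*(n/2))).erase v.val))).card = n/2 + 1 := by
    intro a b ha hb hab hvm hvm2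
    rw [Finset.card_insert_of_notMem (by simp only [Finset.mem_insert]; tauto),
      Finset.card_insert_of_notMem hb,
      Finset.card_erase_of_mem (by simp only [Finset.mem_Ico]; omega), Nat.card_Ico]
    omega
  rcases lt_or_ge v.val (n/4) with hv1 | hv1
  · -- left gadget vertex
    rcases Nat.eq_zero_or_pos v.val with hv0 | hv0
    · rw [degree_eq_of_nbhd (GB n) v
        (insert (n/2) (insert (n/2 + n/4 - 1) ((Finset.range (n/2)).erase v.val))) ?_]
      · rw [hcard2 _ _ (by simp only [Finset.mem_erase, Finset.mem_range]; omega)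
          (by simp only [Finset.mem_erase, Finset.mem_range]; omega) (by omega) (by omega),
          if_pos hv1]
      · intro x
        simp only [Finset.mem_insert, Finset.mem_erase, Finset.mem_range]
        constructor
        · rintro ⟨j, hj, rfl⟩
          rw [GB_adj] at hj
          unfold crossB at hj
          omega
        · intro hx
          refine ⟨⟨x, by omega⟩, ?_, rfl⟩
          rw [GB_adj]
          unfold crossB
          simp only [Fin.val_mk]
          omega
    · rw [degree_eq_of_nbhd (GB n) v
        (insert (n/2 + v.val) (insert (n/2 + v.val - 1) ((Finset.range (n/2)).erase v.val))) ?_]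
      · rw [hcard2 _ _ (by simp only [Finset.mem_erase, Finset.mem_range]; omega)
          (by simp only [Finset.mem_erase, Finset.mem_range]; omega) (by omega) (by omega),
          if_pos hv1]
      · intro x
        simp only [Finset.mem_insert, Finset.mem_erase, Finset.mem_range]
        constructor
        · rintro ⟨j, hj, rfl⟩
          rw [GB_adj] at hj
          unfold crossB at hj
          omega
        · intro hx
          refine ⟨⟨x, by omega⟩, ?_, rfl⟩
          rw [GB_adj]
          unfold crossB
          simp only [Fin.val_mk]
          omega
  · rcases lt_or_ge v.val (n/2) with hv2 | hv2
    · -- left plain vertex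
      rw [degree_eq_of_nbhd (GB n) v ((Finset.range (n/2)).erase v.val) ?_]
      · rw [Finset.card_erase_of_mem (by simp only [Finset.mem_range]; omega), Finset.card_range,
          if_neg (by omega), if_pos hv2]
      · intro x
        simp only [Finset.mem_erase, Finset.mem_range]
        constructor
        · rintro ⟨j, hj, rfl⟩
          rw [GB_adj] at hj
          unfold crossB at hj
          omega
        · intro hx
          refine ⟨⟨x, by omega⟩, ?_, rfl⟩
          rw [GB_adj]
          unfold crossB
          simp only [Fin.val_mk]
          omega
    · rcases lt_or_ge v.val (n/2 + n/4) with hv3 | hv3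
      · -- right gadget vertex
        rcases Nat.lt_or_ge v.val (n/2 + n/4 - 1) with hv4 | hv4
        · rw [degree_eq_of_nbhd (GB n) v
            (insert (v.val - n/2) (insert (v.val - n/2 + 1)
              ((Finset.Ico (n/2) (2*(n/2))).erase v.val))) ?_]
          · rw [hcard2' _ _ (by simp only [Finset.mem_erase, Finset.mem_Ico]; omega)
              (by simp only [Finset.mem_erase, Finset.mem_Ico]; omega) (by omega) (by omega)
              (by omega), if_neg (by omega), if_neg (by omega), if_pos hv3]
          · intro x
            simp only [Finset.mem_insert, Finset.mem_erase, Finset.mem_Ico]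
            constructor
            · rintro ⟨j, hj, rfl⟩
              rw [GB_adj] at hj
              unfold crossB at hj
              omega
            · intro hx
              refine ⟨⟨x, by omega⟩, ?_, rfl⟩
              rw [GB_adj]
              unfold crossB
              simp only [Fin.val_mk]
              omega
        · rw [degree_eq_of_nbhd (GB n) v
            (insert (n/4 - 1) (insert 0
              ((Finset.Ico (n/2) (2*(n/2))).erase v.val))) ?_]
          · rw [hcard2' _ _ (by simp only [Finset.mem_erase, Finset.mem_Ico]; omega)
              (by simp only [Finset.mem_erase, Finset.mem_Ico]; omega) (by omega) (by omega)
              (by omega), if_neg (by omega), if_neg (by omega), if_pos hv3]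
          · intro x
            simp only [Finset.mem_insert, Finset.mem_erase, Finset.mem_Ico]
            constructor
            · rintro ⟨j, hj, rfl⟩
              rw [GB_adj] at hj
              unfold crossB at hj
              omega
            · intro hx
              refine ⟨⟨x, by omega⟩, ?_, rfl⟩
              rw [GB_adj]
              unfold crossB
              simp only [Fin.val_mk]
              omega
      · rcases lt_or_ge v.val (2*(n/2)) with hv5 | hv5
        · -- right plain vertex
          rw [degree_eq_of_nbhd (GB n) v ((Finset.Ico (n/2) (2*(n/2))).erase v.val) ?_]
          · rw [Finset.card_erase_of_mem (by simp only [Finset.mem_Ico]; omega), Nat.card_Ico,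
              if_neg (by omega), if_neg (by omega), if_neg (by omega), if_pos hv5]
            omega
          · intro x
            simp only [Finset.mem_erase, Finset.mem_Ico]
            constructor
            · rintro ⟨j, hj, rfl⟩
              rw [GB_adj] at hj
              unfold crossB at hj
              omega
            · intro hx
              refine ⟨⟨x, by omega⟩, ?_, rfl⟩
              rw [GB_adj]
              unfold crossB
              simp only [Fin.val_mk]
              omega
        · -- isolated vertex
          rw [degree_eq_of_nbhd (GB n) v (∅ : Finset ℕ) ?_, Finset.card_empty,
            if_neg (by omega), if_neg (by omega), if_neg (by omega), if_neg (by omega)]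
          intro x
          simp only [Finset.notMem_empty, iff_false, not_exists]
          intro j ⟨hj, hjx⟩
          rw [GB_adj] at hj
          unfold crossB at hj
          omega


def M4 : SimpleGraph (Fin 4) where
  Adj i j := ¬ (i.val = j.val) ∧ i.val / 2 = j.val / 2
  symm := by constructor; rintro i j ⟨h1, h2⟩; exact ⟨fun h => h1 h.symm, h2.symm⟩
  loopless := by constructor; rintro i ⟨h1, _⟩; exact h1 rfl

instance M4_dec : DecidableRel M4.Adj := fun i j => by
  change Decidable (_ ∧ _); infer_instance

def S5 : SimpleGraph (Fin 5) where
  Adj i j := ¬ (i.val = j.val) ∧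
    ((i.val = 0 ∧ 1 ≤ j.val ∧ j.val ≤ 3) ∨ (j.val = 0 ∧ 1 ≤ i.val ∧ i.val ≤ 3) ∨
     (i.val = 1 ∧ j.val = 4) ∨ (j.val = 1 ∧ i.val = 4))
  symm := by constructor; rintro i j ⟨h1, h2⟩; refine ⟨fun h => h1 h.symm, by tauto⟩
  loopless := by constructor; rintro i ⟨h1, _⟩; exact h1 rfl

instance S5_dec : DecidableRel S5.Adj := fun i j => by
  change Decidable (_ ∧ _); infer_instance


lemma GA_sum_aux : True := trivial

lemma noTrail {n k : ℕ} (G : SimpleGraph (Fin n)) [DecidableRel G.Adj] (s : Finset (Fin n))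
    (hs : ∀ x ∈ s, Odd (G.degree x)) (hlt : (∑ x, G.degree x) + 4 < 2 * k + s.card) :
    ¬ HasTrailWithVertices G k := by
  rintro ⟨u, v, p, hp, hlen⟩
  have := trail_degree_sum G p hp s hs
  omega

lemma compl_deg_sum {n : ℕ} (G : SimpleGraph (Fin n)) [DecidableRel G.Adj] :
    (∑ x, Gᶜ.degree x) + (∑ x, G.degree x) + n = n * n := by
  have h : ∀ v : Fin n, Gᶜ.degree v + G.degree v + 1 = n := by
    intro v
    have h1 : Gᶜ.degree v = Fintype.card (Fin n) - 1 - G.degree v := G.degree_compl v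
    have h2 : G.degree v < Fintype.card (Fin n) := G.degree_lt_card_verts v
    simp only [Fintype.card_fin] at h1 h2
    omega
  have hs : ∑ v : Fin n, (Gᶜ.degree v + G.degree v + 1) = n * n := by
    rw [Finset.sum_congr rfl fun v _ => h v, Finset.sum_const, Finset.card_univ,
      Fintype.card_fin, smul_eq_mul]
  rw [Finset.sum_add_distrib, Finset.sum_add_distrib, Finset.sum_const, Finset.card_univ,
    Fintype.card_fin, smul_eq_mul, mul_one] at hs
  omega

lemma GA_sum (n : ℕ) : ∑ x : Fin n, (GA n).degree x = 2*(n/2)*(n/2) := by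
  calc ∑ x : Fin n, (GA n).degree x
      = ∑ x : Fin n, (if x.val < 2*(n/2) then n/2 else 0) :=
        Finset.sum_congr rfl (fun x _ => GA_degree x)
    _ = ∑ i ∈ Finset.range n, (if i < 2*(n/2) then n/2 else 0) :=
        Fin.sum_univ_eq_sum_range (fun i => if i < 2*(n/2) then n/2 else 0) n
    _ = ∑ i ∈ (Finset.range n).filter (fun i => i < 2*(n/2)), n/2 :=
        (Finset.sum_filter _ _).symm
    _ = 2*(n/2)*(n/2) := by
        rw [show (Finset.range n).filter (fun i => i < 2*(n/2)) = Finset.range (2*(n/2)) by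
          ext x; simp only [Finset.mem_filter, Finset.mem_range]; omega]
        rw [Finset.sum_const, Finset.card_range, smul_eq_mul]

lemma GB_sum {n : ℕ} (hm : n/2 = 2*(n/4)) (hh : 2 ≤ n/4) :
    ∑ x : Fin n, (GB n).degree x = 2*(n/2)*(n/2) := by
  have hn1 : n/4 ≤ n/2 := by omega
  have hn2 : n/2 ≤ n/2 + n/4 := by omega
  have hn3 : n/2 + n/4 ≤ 2*(n/2) := by omega
  have hn4 : 2*(n/2) ≤ n := by omega
  calc ∑ x : Fin n, (GB n).degree x
      = ∑ i ∈ Finset.range n, (if i < n/4 then n/2+1 else if i < n/2 then n/2-1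
          else if i < n/2 + n/4 then n/2+1 else if i < 2*(n/2) then n/2-1 else 0) := by
        rw [← Fin.sum_univ_eq_sum_range]
        exact Finset.sum_congr rfl (fun x _ => GB_degree hm hh x)
    _ = 2*(n/2)*(n/2) := by
        rw [Finset.range_eq_Ico,
          ← Finset.sum_Ico_consecutive _ (Nat.zero_le (2*(n/2))) hn4,
          ← Finset.sum_Ico_consecutive _ (le_trans (Nat.zero_le _) hn2) hn3,
          ← Finset.sum_Ico_consecutive _ (Nat.zero_le (n/2)) hn2,
          ← Finset.sum_Ico_consecutive _ (Nat.zero_le (n/4)) hn1]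
        rw [Finset.sum_congr rfl (g := fun _ => n/2+1)
            (fun x hx => by simp only [Finset.mem_Ico] at hx; rw [if_pos (by omega)]),
          Finset.sum_congr (rfl : Finset.Ico (n/4) (n/2) = _) (g := fun _ => n/2-1)
            (fun x hx => by simp only [Finset.mem_Ico] at hx
                            rw [if_neg (by omega), if_pos (by omega)]),
          Finset.sum_congr (rfl : Finset.Ico (n/2) (n/2+n/4) = _) (g := fun _ => n/2+1)
            (fun x hx => by simp only [Finset.mem_Ico] at hx
                            rw [if_neg (by omega), if_neg (by omega), if_pos (by omega)]),
          Finset.sum_congr (rfl : Finset.Ico (n/2+n/4) (2*(n/2)) = _) (g := fun _ => n/2-1)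
            (fun x hx => by simp only [Finset.mem_Ico] at hx
                            rw [if_neg (by omega), if_neg (by omega), if_neg (by omega),
                              if_pos (by omega)]),
          Finset.sum_congr (rfl : Finset.Ico (2*(n/2)) n = _) (g := fun _ => 0)
            (fun x hx => by simp only [Finset.mem_Ico] at hx
                            rw [if_neg (by omega), if_neg (by omega), if_neg (by omega),
                              if_neg (by omega)])]
        simp only [Finset.sum_const, Nat.card_Ico, smul_eq_mul, Finset.sum_const_zero,
          Nat.sub_zero, add_zero]
        rw [hm]
        obtain ⟨h', hh'⟩ : ∃ h', n/4 = h' + 2 := ⟨n/4 - 2, by omega⟩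
        rw [hh']
        zify [show (h'+2:ℕ) ≤ 2*(h'+2) by omega, show (1:ℕ) ≤ 2*(h'+2) by omega,
          show (2*(h'+2):ℕ) ≤ 2*(h'+2)+(h'+2) by omega,
          show (2*(h'+2)+(h'+2):ℕ) ≤ 2*(2*(h'+2)) by omega]
        ring

lemma compl_deg {n : ℕ} (G : SimpleGraph (Fin n)) [DecidableRel G.Adj] (v : Fin n) :
    Gᶜ.degree v + G.degree v + 1 = n := by
  have h1 : Gᶜ.degree v = Fintype.card (Fin n) - 1 - G.degree v := G.degree_compl v
  have h2 : G.degree v < Fintype.card (Fin n) := G.degree_lt_card_verts v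
  simp only [Fintype.card_fin] at h1 h2
  omega

lemma card_filter_lt (n c : ℕ) (hc : c ≤ n) :
    (Finset.univ.filter (fun v : Fin n => v.val < c)).card = c := by
  have h : (Finset.univ.filter (fun v : Fin n => v.val < c)).card = (Finset.range c).card := by
    refine Finset.card_bij (fun j _ => j.val) ?_ ?_ ?_
    · intro a ha
      simp only [Finset.mem_filter, Finset.mem_univ, true_and] at ha
      simp only [Finset.mem_range]
      exact ha
    · intro a _ b _ hab; exact Fin.val_injective hab
    · intro x hx
      simp only [Finset.mem_range] at hx
      exact ⟨⟨x, by omega⟩, by simp only [Finset.mem_filter, Finset.mem_univ, true_and]; exact hx,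
        rfl⟩
  rw [h, Finset.card_range]

lemma arithG {n k : ℕ} (hn6 : 6 ≤ n) (hq : n*n + 4 ≤ 4*k + n) :
    2*(n/2)*(n/2) + 4 < 2*k + 2*(n/2) := by
  obtain ⟨m, hm', hn2⟩ : ∃ m, m = n/2 ∧ (n = 2*m ∨ n = 2*m+1) := ⟨n/2, rfl, by omega⟩
  rw [← hm']
  have hm3 : 3 ≤ m := by omega
  rcases hn2 with h | h <;> subst h <;> ring_nf at hq ⊢ <;> nlinarith [hq, hm3]

lemma arithC {n k S : ℕ} (hn6 : 6 ≤ n) (hq : n*n + 4 ≤ 4*k + n)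
    (hcs : S + 2*(n/2)*(n/2) + n = n*n) :
    S + 4 < 2*k + (if n % 2 = 1 then 2*(n/2) else 0) := by
  obtain ⟨m, hm', hn2⟩ : ∃ m, m = n/2 ∧ (n = 2*m ∨ n = 2*m+1) := ⟨n/2, rfl, by omega⟩
  rw [← hm'] at hcs ⊢
  have hm3 : 3 ≤ m := by omega
  rcases hn2 with h | h
  · rw [show (if n % 2 = 1 then 2*m else 0) = 0 by rw [if_neg]; omega]
    subst h
    ring_nf at hq hcs ⊢
    nlinarith [hq, hcs, hm3]
  · rw [show (if n % 2 = 1 then 2*m else 0) = 2*m by rw [if_pos]; omega]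
    subst h
    ring_nf at hq hcs ⊢
    nlinarith [hq, hcs, hm3]


end Aux

/-- For every integer `k ≥ 7` and every `n` with `n < (1 + √(16k − 7))/2`, there is a
simple graph `G` on `n` vertices such that neither `G` nor its complement contains a
trail with `k` vertices, i.e., `R(T_k, T_k) ≥ ⌈(1 + √(16k − 7))/2⌉`. -/
theorem ramsey_trail_lower_bound (k : ℕ) (hk : 7 ≤ k) (n : ℕ)
    (hn : (n : ℝ) < (1 + Real.sqrt (16 * (k : ℝ) - 7)) / 2) :
    ∃ G : SimpleGraph (Fin n),
      ¬ HasTrailWithVertices G k ∧ ¬ HasTrailWithVertices Gᶜ k := by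
  have hq' : n * n + 4 ≤ 4 * k + n := by
    rcases Nat.eq_zero_or_pos n with h0 | h1
    · subst h0; omega
    · have hk7 : (7:ℝ) ≤ (k:ℝ) := by exact_mod_cast hk
      have h16 : (0:ℝ) ≤ 16*(k:ℝ) - 7 := by linarith
      have h2 : 2*(n:ℝ) - 1 < Real.sqrt (16*(k:ℝ) - 7) := by linarith [hn]
      have hnn : (0:ℝ) ≤ 2*(n:ℝ) - 1 := by
        have : (1:ℝ) ≤ (n:ℝ) := by exact_mod_cast h1
        linarith
      have h3 : (2*(n:ℝ) - 1)^2 < 16*(k:ℝ) - 7 := by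
        nlinarith [h2, hnn, Real.sq_sqrt h16, Real.sqrt_nonneg (16*(k:ℝ) - 7)]
      have h5 : (2*(n:ℤ) - 1)^2 < 16*(k:ℤ) - 7 := by exact_mod_cast h3
      obtain ⟨c, hc⟩ : ∃ c : ℤ, (n:ℤ)*(n:ℤ) - n = 2*c := by
        rcases Int.even_or_odd (n:ℤ) with ⟨c, hc⟩ | ⟨c, hc⟩
        · exact ⟨2*c*c - c, by rw [hc]; ring⟩
        · exact ⟨2*c*c + c, by rw [hc]; ring⟩
      have h6 : 4*((n:ℤ)*(n:ℤ)) - 4*(n:ℤ) + 1 < 16*(k:ℤ) - 7 := by nlinarith [h5]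
      have h7 : (n:ℤ)*(n:ℤ) = 2*c + n := by linarith [hc]
      rw [h7] at h6
      zify
      rw [h7]
      omega
  by_cases hn6 : n < 6
  · interval_cases n
    · refine ⟨⊥, noTrail _ ∅ (by simp) ?_, noTrail _ ∅ (by simp) ?_⟩
      · have h : ∑ x : Fin 0, (⊥ : SimpleGraph (Fin 0)).degree x = 0 := by decide
        omega
      · have h : ∑ x : Fin 0, (⊥ : SimpleGraph (Fin 0))ᶜ.degree x = 0 := by decide
        omega
    · refine ⟨⊥, noTrail _ ∅ (by simp) ?_, noTrail _ ∅ (by simp) ?_⟩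
      · have h : ∑ x : Fin 1, (⊥ : SimpleGraph (Fin 1)).degree x = 0 := by decide
        omega
      · have h : ∑ x : Fin 1, (⊥ : SimpleGraph (Fin 1))ᶜ.degree x = 0 := by decide
        omega
    · refine ⟨⊥, noTrail _ ∅ (by simp) ?_, noTrail _ ∅ (by simp) ?_⟩
      · have h : ∑ x : Fin 2, (⊥ : SimpleGraph (Fin 2)).degree x = 0 := by decide
        omega
      · have h : ∑ x : Fin 2, (⊥ : SimpleGraph (Fin 2))ᶜ.degree x = 2 := by decide
        omega
    · refine ⟨⊥, noTrail _ ∅ (by simp) ?_, noTrail _ ∅ (by simp) ?_⟩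
      · have h : ∑ x : Fin 3, (⊥ : SimpleGraph (Fin 3)).degree x = 0 := by decide
        omega
      · have h : ∑ x : Fin 3, (⊥ : SimpleGraph (Fin 3))ᶜ.degree x = 6 := by decide
        omega
    · refine ⟨M4, noTrail _ Finset.univ (by decide) ?_, noTrail _ ∅ (by simp) ?_⟩
      · have h : ∑ x : Fin 4, M4.degree x = 4 := by decide
        have hc : (Finset.univ : Finset (Fin 4)).card = 4 := by decide
        omega
      · have h : ∑ x : Fin 4, M4ᶜ.degree x = 8 := by decide
        omega
    · refine ⟨S5, noTrail _ ({0,2,3,4} : Finset (Fin 5)) (by decide) ?_,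
        noTrail _ ({0,2,3,4} : Finset (Fin 5)) (by decide) ?_⟩
      · have h : ∑ x : Fin 5, S5.degree x = 8 := by decide
        have hc : ({0,2,3,4} : Finset (Fin 5)).card = 4 := by decide
        omega
      · have h : ∑ x : Fin 5, S5ᶜ.degree x = 12 := by decide
        have hc : ({0,2,3,4} : Finset (Fin 5)).card = 4 := by decide
        omega
  · push_neg at hn6
    by_cases hpar : (n/2) % 2 = 1
    · -- GA
      refine ⟨GA n, ?_, ?_⟩
      · apply noTrail _ (Finset.univ.filter (fun v : Fin n => v.val < 2*(n/2)))
        · intro x hx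
          simp only [Finset.mem_filter, Finset.mem_univ, true_and] at hx
          rw [GA_degree x, if_pos hx, Nat.odd_iff]
          exact hpar
        · rw [GA_sum, card_filter_lt _ _ (by omega)]
          exact arithG hn6 hq'
      · have hcs := compl_deg_sum (GA n)
        rw [GA_sum] at hcs
        rcases Nat.even_or_odd n with hne | hno
        · apply noTrail _ (∅ : Finset (Fin n))
          · simp
          · have := arithC hn6 hq' hcs
            rw [if_neg (by rw [Nat.even_iff] at hne; omega)] at this
            omega
        · apply noTrail _ (Finset.univ.filter (fun v : Fin n => v.val < 2*(n/2)))
          · intro x hx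
            simp only [Finset.mem_filter, Finset.mem_univ, true_and] at hx
            have h1 := compl_deg (GA n) x
            rw [GA_degree x, if_pos hx] at h1
            rw [Nat.odd_iff] at hno ⊢
            omega
          · rw [card_filter_lt _ _ (by omega)]
            have := arithC hn6 hq' hcs
            rw [if_pos (by rw [Nat.odd_iff] at hno; omega)] at this
            omega
    · -- GB
      have hm : n/2 = 2*(n/4) := by omega
      have hh : 2 ≤ n/4 := by omega
      refine ⟨GB n, ?_, ?_⟩
      · apply noTrail _ (Finset.univ.filter (fun v : Fin n => v.val < 2*(n/2)))
        · intro x hx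
          simp only [Finset.mem_filter, Finset.mem_univ, true_and] at hx
          rw [GB_degree hm hh x, Nat.odd_iff]
          split_ifs <;> omega
        · rw [GB_sum hm hh, card_filter_lt _ _ (by omega)]
          exact arithG hn6 hq'
      · have hcs := compl_deg_sum (GB n)
        rw [GB_sum hm hh] at hcs
        rcases Nat.even_or_odd n with hne | hno
        · apply noTrail _ (∅ : Finset (Fin n))
          · simp
          · have := arithC hn6 hq' hcs
            rw [if_neg (by rw [Nat.even_iff] at hne; omega)] at this
            omega
        · apply noTrail _ (Finset.univ.filter (fun v : Fin n => v.val < 2*(n/2)))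
          · intro x hx
            simp only [Finset.mem_filter, Finset.mem_univ, true_and] at hx
            have h1 := compl_deg (GB n) x
            rw [GB_degree hm hh x] at h1
            rw [Nat.odd_iff] at hno ⊢
            split_ifs at h1 <;> omega
          · rw [card_filter_lt _ _ (by omega)]
            have := arithC hn6 hq' hcs
            rw [if_pos (by rw [Nat.odd_iff] at hno; omega)] at this
            omega
end

section
/- There exists a simple graph G on 5 vertices such that neither G nor its complement contains a trail with 7 vertices. (Together with the upper-bound direction, this shows R(T_7, T_7) = R(T_8, T_8) = 6.) -/
/-- The 5-cycle on `Fin 5`. -/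
def C5 : SimpleGraph (Fin 5) where
  Adj i j := i - j = 1 ∨ j - i = 1
  symm := ⟨by intro i j h; tauto⟩
  loopless := ⟨by intro i h; simp at h⟩

instance : DecidableRel C5.Adj := fun i j => by unfold C5; simp only; infer_instance

lemma few_edges_no_trail (G : SimpleGraph (Fin 5)) [DecidableRel G.Adj]
    (h : G.edgeFinset.card ≤ 5) : ¬ HasTrailWithVertices G 7 := by
  rintro ⟨u, v, p, ht, hl⟩
  have hsub : p.edges.toFinset ⊆ G.edgeFinset := by
    intro e he
    rw [List.mem_toFinset] at he
    rw [SimpleGraph.mem_edgeFinset]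
    exact p.edges_subset_edgeSet he
  have hcard : p.edges.toFinset.card = 6 := by
    rw [List.toFinset_card_of_nodup ht.edges_nodup, p.length_edges]
    omega
  have := Finset.card_le_card hsub
  omega

/-- There is a simple graph `G` on 5 vertices such that neither `G` nor its
complement contains a trail with 7 vertices. -/
theorem no_trail7_on_five_vertices :
    ∃ G : SimpleGraph (Fin 5),
      ¬ HasTrailWithVertices G 7 ∧ ¬ HasTrailWithVertices Gᶜ 7 := by
  refine ⟨C5, few_edges_no_trail _ (by decide), few_edges_no_trail _ (by decide)⟩
end

section
/- Let G be a bipartite simple graph with partite sets A and B (every edge of G joins a vertex of A with a vertex of B). If |A| = 3 and every vertex of B has degree exactly two in G, then G contains a trail with exactly 2|B| edges whose two endpoints both belong to A. -/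
open SimpleGraph

namespace BTL

variable {V : Type*} [DecidableEq V] (G : SimpleGraph V)

/-- labels of a list of pairs -/
def labels {α : Type*} (P : List (α × α)) : List α := P.flatMap fun p => [p.1, p.2]

@[simp] lemma labels_nil {α : Type*} : labels ([] : List (α × α)) = [] := rfl
@[simp] lemma labels_cons {α : Type*} (p : α × α) (P : List (α × α)) :
    labels (p :: P) = p.1 :: p.2 :: labels P := rfl

lemma exists_pairs {α : Type*} : ∀ (ℓ : List α),
    (∃ P, ℓ = labels P) ∨ ∃ P b, ℓ = labels P ++ [b]
  | [] => .inl ⟨[], rfl⟩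
  | [b] => .inr ⟨[], b, rfl⟩
  | b :: c :: t => by
    rcases exists_pairs t with ⟨P, hP⟩ | ⟨P, d, hP⟩
    · exact .inl ⟨(b, c) :: P, by simp [hP]⟩
    · exact .inr ⟨(b, c) :: P, d, by simp [hP]⟩

/-- Good walk predicate: a trail from u to v of length 2·|L| whose every edge
contains an element of L. -/
def GW (u v : V) (L : List V) : Prop :=
  ∃ W : G.Walk u v, W.IsTrail ∧ W.length = 2 * L.length ∧
    ∀ e ∈ W.edges, ∃ b ∈ L, b ∈ e

lemma GW.nil (u : V) : GW G u u [] :=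
  ⟨Walk.nil, by simp [Walk.IsTrail], by simp, by simp⟩

lemma GW.hop {u b v : V} (h1 : G.Adj u b) (h2 : G.Adj b v) (huv : u ≠ v) :
    GW G u v [b] := by
  refine ⟨Walk.cons h1 (Walk.cons h2 Walk.nil), ?_, by simp, ?_⟩
  · constructor
    simp [Sym2.eq_iff]
    exact ⟨fun hub => absurd hub h1.ne, huv⟩
  · intro e he
    simp only [Walk.edges_cons, Walk.edges_nil, List.mem_cons, List.not_mem_nil, or_false] at he
    rcases he with rfl | rfl <;> simp

def pairsWalk (u v : V) : (P : List (V × V)) →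
    (∀ p ∈ P, (G.Adj u p.1 ∧ G.Adj p.1 v) ∧ (G.Adj v p.2 ∧ G.Adj p.2 u)) → G.Walk u u
  | [], _ => Walk.nil
  | p :: P, h =>
    Walk.cons (h p List.mem_cons_self).1.1
      (Walk.cons (h p List.mem_cons_self).1.2
        (Walk.cons (h p List.mem_cons_self).2.1
          (Walk.cons (h p List.mem_cons_self).2.2
            (pairsWalk u v P fun q hq => h q (List.mem_cons_of_mem _ hq)))))

lemma pairsWalk_length (u v : V) (P : List (V × V)) (h) :
    (pairsWalk G u v P h).length = 4 * P.length := by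
  induction P with
  | nil => simp [pairsWalk]
  | cons p P ih => simp [pairsWalk, ih]; ring

lemma pairsWalk_mem (u v : V) (P : List (V × V)) (h) :
    ∀ e ∈ (pairsWalk G u v P h).edges, ∃ b ∈ labels P, b ∈ e := by
  induction P with
  | nil => simp [pairsWalk]
  | cons p P ih =>
    intro e he
    simp only [pairsWalk, Walk.edges_cons, List.mem_cons] at he
    rcases he with rfl | rfl | rfl | rfl | he
    · exact ⟨p.1, by simp, by simp⟩
    · exact ⟨p.1, by simp, by simp⟩
    · exact ⟨p.2, by simp, by simp⟩
    · exact ⟨p.2, by simp, by simp⟩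
    · obtain ⟨b, hb, hbe⟩ := ih _ e he
      exact ⟨b, List.mem_cons_of_mem _ (List.mem_cons_of_mem _ hb), hbe⟩

lemma pairsWalk_trail (u v : V) (P : List (V × V)) (h) (huv : u ≠ v)
    (hnd : (labels P).Nodup) (hu : u ∉ labels P) (hv : v ∉ labels P) :
    (pairsWalk G u v P h).IsTrail := by
  induction P with
  | nil => simp [pairsWalk, Walk.IsTrail]
  | cons p P ih =>
    obtain ⟨b, c⟩ := p
    simp only [labels_cons, List.nodup_cons, List.mem_cons, not_or] at hnd hu hv
    obtain ⟨⟨hbc, hbP⟩, hcP, hndP⟩ := hnd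
    obtain ⟨hub, huc, huP⟩ := hu
    obtain ⟨hvb, hvc, hvP⟩ := hv
    have htail := ih (fun q hq => h q (List.mem_cons_of_mem _ hq)) hndP huP hvP
    rw [Walk.isTrail_def]
    simp only [pairsWalk, Walk.edges_cons]
    have key : ∀ w1 w2 : V, w1 ∉ labels P → w2 ∉ labels P →
        s(w1, w2) ∉ (pairsWalk G u v P fun q hq => h q (List.mem_cons_of_mem _ hq)).edges := by
      intro w1 w2 h1 h2 hmem
      obtain ⟨d, hd, hde⟩ := pairsWalk_mem G u v P _ _ hmem
      rcases Sym2.mem_iff.1 hde with rfl | rfl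
      exacts [h1 hd, h2 hd]
    simp only [List.nodup_cons, List.mem_cons, not_or]
    refine ⟨⟨?_, ?_, ?_, key u b huP hbP⟩, ⟨?_, ?_, key b v hbP hvP⟩,
      ⟨?_, key v c hvP hcP⟩, key c u hcP huP, htail.edges_nodup⟩ <;>
      simp [Sym2.eq_iff] <;> tauto


lemma labels_length {α : Type*} (P : List (α × α)) : (labels P).length = 2 * P.length := by
  induction P with
  | nil => simp
  | cons p P ih => simp [ih]; ring

lemma mem_labels {α : Type*} {P : List (α × α)} {p : α × α} (hp : p ∈ P) :
    p.1 ∈ labels P ∧ p.2 ∈ labels P := by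
  constructor <;> · simp only [labels, List.mem_flatMap]; exact ⟨p, hp, by simp⟩

lemma GW.pairs (u v : V) (P : List (V × V)) (huv : u ≠ v)
    (hadj : ∀ b ∈ labels P, G.Adj b u ∧ G.Adj b v)
    (hnd : (labels P).Nodup) (hu : u ∉ labels P) (hv : v ∉ labels P) :
    GW G u u (labels P) := by
  have h : ∀ p ∈ P, (G.Adj u p.1 ∧ G.Adj p.1 v) ∧ (G.Adj v p.2 ∧ G.Adj p.2 u) := by
    intro p hp
    obtain ⟨h1, h2⟩ := mem_labels hp
    exact ⟨⟨(hadj _ h1).1.symm, (hadj _ h1).2⟩, ⟨(hadj _ h2).2.symm, (hadj _ h2).1⟩⟩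
  exact ⟨pairsWalk G u v P h, pairsWalk_trail G u v P h huv hnd hu hv,
    by rw [pairsWalk_length, labels_length]; ring, pairsWalk_mem G u v P h⟩

lemma GW.append {u v w : V} {L1 L2 : List V} (h1 : GW G u v L1) (h2 : GW G v w L2)
    (hd : ∀ b1 ∈ L1, ∀ b2 ∈ L2, ¬ G.Adj b1 b2 ∧ b1 ≠ b2) :
    GW G u w (L1 ++ L2) := by
  obtain ⟨W1, ht1, hl1, hm1⟩ := h1
  obtain ⟨W2, ht2, hl2, hm2⟩ := h2
  refine ⟨W1.append W2, ?_, ?_, ?_⟩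
  · rw [Walk.isTrail_def, Walk.edges_append]
    refine List.Nodup.append ht1.edges_nodup ht2.edges_nodup ?_
    intro e he1 he2
    obtain ⟨b1, hb1, hbe1⟩ := hm1 e he1
    obtain ⟨b2, hb2, hbe2⟩ := hm2 e he2
    obtain ⟨hadj, hne⟩ := hd b1 hb1 b2 hb2
    have : e = s(b1, b2) := ((Sym2.mem_and_mem_iff hne).1 ⟨hbe1, hbe2⟩)
    exact hadj (G.mem_edgeSet.1 (this ▸ W1.edges_subset_edgeSet he1))
  · rw [Walk.length_append, hl1, hl2, List.length_append]; ring
  · intro e he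
    rw [Walk.edges_append, List.mem_append] at he
    rcases he with he | he
    · obtain ⟨b, hb, hbe⟩ := hm1 e he
      exact ⟨b, List.mem_append_left _ hb, hbe⟩
    · obtain ⟨b, hb, hbe⟩ := hm2 e he
      exact ⟨b, List.mem_append_right _ hb, hbe⟩

end BTL


open BTL in
/-- Let `G` be a bipartite simple graph with partite sets `A` and `B` (every edge joins
a vertex of `A` with a vertex of `B`). If `|A| = 3` and every vertex of `B` has degree
exactly two, then `G` contains a trail with exactly `2|B|` edges whose two endpoints
both belong to `A`. -/
theorem bipartite_trail_lemma {V : Type*} [Fintype V] [DecidableEq V]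
    (G : SimpleGraph V) [DecidableRel G.Adj] (A B : Finset V)
    (hunion : A ∪ B = Finset.univ) (hdisj : Disjoint A B)
    (hbip : ∀ u v : V, G.Adj u v → (u ∈ A ∧ v ∈ B) ∨ (u ∈ B ∧ v ∈ A))
    (hA : A.card = 3) (hdeg : ∀ b ∈ B, G.degree b = 2) :
    ∃ (a₁ : V) (_ : a₁ ∈ A) (a₂ : V) (_ : a₂ ∈ A) (p : G.Walk a₁ a₂),
      p.IsTrail ∧ p.length = 2 * B.card := by
  classical
  obtain ⟨x, y, z, hxy, hxz, hyz, hA3⟩ := Finset.card_eq_three.1 hA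
  have hxA : x ∈ A := by rw [hA3]; simp
  have hyA : y ∈ A := by rw [hA3]; simp
  have hzA : z ∈ A := by rw [hA3]; simp
  have hAnB : ∀ a ∈ A, a ∉ B := fun a ha hb => (Finset.disjoint_left.1 hdisj) ha hb
  have hxB := hAnB x hxA
  have hyB := hAnB y hyA
  have hzB := hAnB z hzA
  have hBB : ∀ b1 ∈ B, ∀ b2 ∈ B, ¬ G.Adj b1 b2 := by
    intro b1 h1 b2 h2 hadj
    rcases hbip b1 b2 hadj with ⟨hb, _⟩ | ⟨_, hb⟩
    · exact hAnB b1 hb h1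
    · exact hAnB b2 hb h2
  have hclass : ∀ b ∈ B, (G.Adj b x ∧ G.Adj b y ∧ ¬G.Adj b z) ∨
      (G.Adj b y ∧ G.Adj b z ∧ ¬G.Adj b x) ∨ (G.Adj b z ∧ G.Adj b x ∧ ¬G.Adj b y) := by
    intro b hb
    have hNA : G.neighborFinset b ⊆ A := by
      intro v hv
      rw [SimpleGraph.mem_neighborFinset] at hv
      rcases hbip b v hv with ⟨hbA, _⟩ | ⟨_, hvA⟩
      · exact absurd hbA (fun h => hAnB b h hb)
      · exact hvA
    have hN2 : (G.neighborFinset b).card = 2 := by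
      rw [G.card_neighborFinset_eq_degree]; exact hdeg b hb
    obtain ⟨u, w, huw, hN⟩ := Finset.card_eq_two.1 hN2
    have hadj' : ∀ v, G.Adj b v ↔ (v = u ∨ v = w) := by
      intro v
      rw [← SimpleGraph.mem_neighborFinset, hN]
      simp
    have hu : u ∈ A := hNA (by rw [hN]; simp)
    have hw : w ∈ A := hNA (by rw [hN]; simp)
    rw [hA3] at hu hw
    simp only [Finset.mem_insert, Finset.mem_singleton] at hu hw
    rcases hu with rfl | rfl | rfl <;> rcases hw with rfl | rfl | rfl <;>
      simp [hadj', hxy, hxz, hyz, hxy.symm, hxz.symm, hyz.symm, huw, Ne.symm huw] <;> tauto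
  set Bxy := B.filter (fun b => G.Adj b x ∧ G.Adj b y) with hBxy
  set Byz := B.filter (fun b => G.Adj b y ∧ G.Adj b z) with hByz
  set Bzx := B.filter (fun b => G.Adj b z ∧ G.Adj b x) with hBzx
  have hnot3 : ∀ b ∈ B, ¬(G.Adj b x ∧ G.Adj b y ∧ G.Adj b z) := by
    intro b hb h3
    rcases hclass b hb with ⟨_, _, h⟩ | ⟨_, _, h⟩ | ⟨_, _, h⟩ <;> tauto
  set Lxy := Bxy.toList with hLxy
  set Lyz := Byz.toList with hLyz
  set Lzx := Bzx.toList with hLzx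
  have hmxy : ∀ b ∈ Lxy, b ∈ B ∧ G.Adj b x ∧ G.Adj b y := by
    intro b hb; rw [hLxy, Finset.mem_toList, hBxy, Finset.mem_filter] at hb; exact hb
  have hmyz : ∀ b ∈ Lyz, b ∈ B ∧ G.Adj b y ∧ G.Adj b z := by
    intro b hb; rw [hLyz, Finset.mem_toList, hByz, Finset.mem_filter] at hb; exact hb
  have hmzx : ∀ b ∈ Lzx, b ∈ B ∧ G.Adj b z ∧ G.Adj b x := by
    intro b hb; rw [hLzx, Finset.mem_toList, hBzx, Finset.mem_filter] at hb; exact hb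
  -- the three lists concatenated are nodup and enumerate B
  have hndall : (Lxy ++ Lyz ++ Lzx).Nodup := by
    rw [List.nodup_append, List.nodup_append]
    refine ⟨⟨Finset.nodup_toList _, Finset.nodup_toList _, ?_⟩, Finset.nodup_toList _, ?_⟩
    · intro b hb _ hb2 rfl
      obtain ⟨hbB, h1, h2⟩ := hmxy b hb
      obtain ⟨_, h3, h4⟩ := hmyz b hb2
      exact hnot3 b hbB ⟨h1, h2, h4⟩
    · intro b hb _ hb2 rfl
      obtain ⟨_, h5, h6⟩ := hmzx b hb2
      rw [List.mem_append] at hb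
      rcases hb with hb | hb
      · obtain ⟨hbB, h1, h2⟩ := hmxy b hb
        exact hnot3 b hbB ⟨h1, h2, h5⟩
      · obtain ⟨hbB, h3, h4⟩ := hmyz b hb
        exact hnot3 b hbB ⟨h6, h3, h4⟩
  have hsuball : ∀ b ∈ Lxy ++ Lyz ++ Lzx, b ∈ B := by
    intro b hb
    rw [List.mem_append, List.mem_append] at hb
    rcases hb with (hb | hb) | hb
    exacts [(hmxy b hb).1, (hmyz b hb).1, (hmzx b hb).1]
  have hlenall : (Lxy ++ Lyz ++ Lzx).length = B.card := by
    have hBeq : Bxy ∪ Byz ∪ Bzx = B := by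
      ext b
      simp only [Finset.mem_union, hBxy, hByz, hBzx, Finset.mem_filter]
      constructor
      · rintro ((h | h) | h) <;> exact h.1
      · intro hb
        rcases hclass b hb with ⟨h1, h2, _⟩ | ⟨h1, h2, _⟩ | ⟨h1, h2, _⟩
        · exact Or.inl (Or.inl ⟨hb, h1, h2⟩)
        · exact Or.inl (Or.inr ⟨hb, h1, h2⟩)
        · exact Or.inr ⟨hb, h1, h2⟩
    have hd1 : Disjoint Bxy Byz := by
      rw [Finset.disjoint_left]
      intro b hb hb2
      rw [hBxy, Finset.mem_filter] at hb
      rw [hByz, Finset.mem_filter] at hb2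
      exact hnot3 b hb.1 ⟨hb.2.1, hb.2.2, hb2.2.2⟩
    have hd2 : Disjoint (Bxy ∪ Byz) Bzx := by
      rw [Finset.disjoint_left]
      intro b hb hb2
      rw [hBzx, Finset.mem_filter] at hb2
      rw [Finset.mem_union, hBxy, hByz, Finset.mem_filter, Finset.mem_filter] at hb
      rcases hb with hb | hb
      · exact hnot3 b hb.1 ⟨hb.2.1, hb.2.2, hb2.2.1⟩
      · exact hnot3 b hb.1 ⟨hb2.2.2, hb.2.1, hb.2.2⟩
    simp only [List.length_append, hLxy, hLyz, hLzx, Finset.length_toList]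
    rw [← Finset.card_union_of_disjoint hd1, ← Finset.card_union_of_disjoint hd2, hBeq]
  -- final packaging
  have key : ∀ (a1 a2 : V) (L : List V), a1 ∈ A → a2 ∈ A → GW G a1 a2 L →
      L.Perm (Lxy ++ Lyz ++ Lzx) →
      ∃ (a₁ : V) (_ : a₁ ∈ A) (a₂ : V) (_ : a₂ ∈ A) (p : G.Walk a₁ a₂),
        p.IsTrail ∧ p.length = 2 * B.card := by
    rintro a1 a2 L h1 h2 ⟨W, ht, hl, -⟩ hperm
    exact ⟨a1, h1, a2, h2, W, ht, by rw [hl, hperm.length_eq, hlenall]⟩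
  have hndxy : Lxy.Nodup := Finset.nodup_toList _
  have hndyz : Lyz.Nodup := Finset.nodup_toList _
  have hndzx : Lzx.Nodup := Finset.nodup_toList _
  have ndleft : ∀ (L1 L2 : List V), (L1 ++ L2).Nodup → L1.Nodup :=
    fun _ _ h => (List.nodup_append.1 h).1
  have subL : ∀ (L1 L2 : List V), (∀ b ∈ L1 ++ L2, b ∈ B) → ∀ b ∈ L1, b ∈ B :=
    fun _ _ h b hb => h b (List.mem_append_left _ hb)
  have subR : ∀ (L1 L2 : List V), (∀ b ∈ L1 ++ L2, b ∈ B) → ∀ b ∈ L2, b ∈ B :=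
    fun _ _ h b hb => h b (List.mem_append_right _ hb)
  have glue : ∀ (u v w : V) (L1 L2 : List V), GW G u v L1 → GW G v w L2 →
      (∀ b ∈ L1, b ∈ B) → (∀ b ∈ L2, b ∈ B) → (L1 ++ L2).Nodup → GW G u w (L1 ++ L2) := by
    intro u v w L1 L2 g1 g2 hs1 hs2 hnd
    refine GW.append G g1 g2 ?_
    intro b1 hb1 b2 hb2
    refine ⟨hBB b1 (hs1 b1 hb1) b2 (hs2 b2 hb2), ?_⟩
    rintro rfl
    exact (List.nodup_append.1 hnd).2.2 _ hb1 _ hb2 rfl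
  have mkpairs : ∀ (u v : V) (P : List (V × V)), u ≠ v → u ∉ B → v ∉ B →
      (∀ b ∈ labels P, b ∈ B ∧ G.Adj b u ∧ G.Adj b v) → (labels P).Nodup →
      GW G u u (labels P) := by
    intro u v P huv huB hvB hmem hnd
    exact GW.pairs G u v P huv (fun b hb => ⟨(hmem b hb).2.1, (hmem b hb).2.2⟩) hnd
      (fun h => huB (hmem _ h).1) (fun h => hvB (hmem _ h).1)
  have mkhop : ∀ (u v b : V), u ≠ v → (b ∈ B ∧ G.Adj b u ∧ G.Adj b v) → GW G u v [b] :=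
    fun u v b huv h => GW.hop G h.2.1.symm h.2.2 huv

  rcases exists_pairs Lxy with ⟨Pxy, hPxy⟩ | ⟨Pxy, bxy, hPxy⟩ <;>
    rcases exists_pairs Lyz with ⟨Pyz, hPyz⟩ | ⟨Pyz, byz, hPyz⟩ <;>
      rcases exists_pairs Lzx with ⟨Pzx, hPzx⟩ | ⟨Pzx, bzx, hPzx⟩
  · rcases Pxy with _ | ⟨⟨bb, cc⟩, P'⟩
    · have hperm : ((labels Pyz ++ labels Pzx)).Perm (Lxy ++ Lyz ++ Lzx) := by
        rw [hPxy, hPyz, hPzx]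
        refine Multiset.coe_eq_coe.mp ?_
        simp only [labels_cons, labels_nil, ← Multiset.coe_add, ← Multiset.cons_coe, Multiset.coe_nil, ← Multiset.singleton_add]
        abel
      have hndbig := hperm.nodup_iff.mpr hndall
      have hsubbig : ∀ b ∈ (labels Pyz ++ labels Pzx), b ∈ B := fun b hb => hsuball b (hperm.subset hb)
      have nd2 := hndbig
      have sub2 := hsubbig
      have g1 := mkpairs z y Pyz hyz.symm hzB hyB (fun b' hb => let m := hmyz b' (by rw [hPyz]; exact hb); ⟨m.1, m.2.2, m.2.1⟩) (by rw [← hPyz]; exact hndyz)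
      have g2 := mkpairs z x Pzx hxz.symm hzB hxB (fun b' hb => hmzx b' (by rw [hPzx]; exact hb)) (by rw [← hPzx]; exact hndzx)
      have acc1 := g1
      have acc2 := glue _ _ _ _ _ acc1 g2 (subL _ _ sub2) (subR _ _ sub2) nd2
      exact key z z _ hzA hzA acc2 hperm
    · have hmb := hmxy bb (by rw [hPxy, labels_cons]; exact List.mem_cons_self)
      have hmc := hmxy cc (by rw [hPxy, labels_cons]; exact List.mem_cons_of_mem _ List.mem_cons_self)
      have hsubP' : ∀ b' ∈ labels P', b' ∈ Lxy := fun b' hb' => by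
        rw [hPxy, labels_cons]; exact List.mem_cons_of_mem _ (List.mem_cons_of_mem _ hb')
      have hndP' : (labels P').Nodup := by
        have h := hndxy; rw [hPxy, labels_cons] at h; exact h.of_cons.of_cons
      have hperm : (((((labels Pzx ++ [bb]) ++ labels Pyz) ++ [cc]) ++ labels P')).Perm (Lxy ++ Lyz ++ Lzx) := by
        rw [hPxy, hPyz, hPzx]
        refine Multiset.coe_eq_coe.mp ?_
        simp only [labels_cons, labels_nil, ← Multiset.coe_add, ← Multiset.cons_coe, Multiset.coe_nil, ← Multiset.singleton_add]
        abel
      have hndbig := hperm.nodup_iff.mpr hndall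
      have hsubbig : ∀ b0 ∈ ((((labels Pzx ++ [bb]) ++ labels Pyz) ++ [cc]) ++ labels P'), b0 ∈ B := fun b0 hb => hsuball b0 (hperm.subset hb)
      have nd5 := hndbig
      have nd4 := ndleft _ _ nd5
      have nd3 := ndleft _ _ nd4
      have nd2 := ndleft _ _ nd3
      have sub5 := hsubbig
      have sub4 := subL _ _ sub5
      have sub3 := subL _ _ sub4
      have sub2 := subL _ _ sub3
      have g1 := mkpairs x z Pzx hxz hxB hzB (fun b' hb => let m := hmzx b' (by rw [hPzx]; exact hb); ⟨m.1, m.2.2, m.2.1⟩) (by rw [← hPzx]; exact hndzx)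
      have g2 := mkhop x y bb hxy hmb
      have g3 := mkpairs y z Pyz hyz hyB hzB (fun b' hb => hmyz b' (by rw [hPyz]; exact hb)) (by rw [← hPyz]; exact hndyz)
      have g4 := mkhop y x cc hxy.symm ⟨hmc.1, hmc.2.2, hmc.2.1⟩
      have g5 := mkpairs x y P' hxy hxB hyB (fun b' hb => hmxy b' (hsubP' b' hb)) hndP'
      have acc1 := g1
      have acc2 := glue _ _ _ _ _ acc1 g2 (subL _ _ sub2) (subR _ _ sub2) nd2
      have acc3 := glue _ _ _ _ _ acc2 g3 (subL _ _ sub3) (subR _ _ sub3) nd3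
      have acc4 := glue _ _ _ _ _ acc3 g4 (subL _ _ sub4) (subR _ _ sub4) nd4
      have acc5 := glue _ _ _ _ _ acc4 g5 (subL _ _ sub5) (subR _ _ sub5) nd5
      exact key x x _ hxA hxA acc5 hperm
  · have hperm : ((((labels Pyz ++ labels Pzx) ++ [bzx]) ++ labels Pxy)).Perm (Lxy ++ Lyz ++ Lzx) := by
      rw [hPxy, hPyz, hPzx]
      refine Multiset.coe_eq_coe.mp ?_
      simp only [labels_cons, labels_nil, ← Multiset.coe_add, ← Multiset.cons_coe, Multiset.coe_nil, ← Multiset.singleton_add]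
      abel
    have hndbig := hperm.nodup_iff.mpr hndall
    have hsubbig : ∀ b ∈ (((labels Pyz ++ labels Pzx) ++ [bzx]) ++ labels Pxy), b ∈ B := fun b hb => hsuball b (hperm.subset hb)
    have nd4 := hndbig
    have nd3 := ndleft _ _ nd4
    have nd2 := ndleft _ _ nd3
    have sub4 := hsubbig
    have sub3 := subL _ _ sub4
    have sub2 := subL _ _ sub3
    have g1 := mkpairs z y Pyz hyz.symm hzB hyB (fun b' hb => let m := hmyz b' (by rw [hPyz]; exact hb); ⟨m.1, m.2.2, m.2.1⟩) (by rw [← hPyz]; exact hndyz)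
    have g2 := mkpairs z x Pzx hxz.symm hzB hxB (fun b' hb => hmzx b' (by rw [hPzx]; exact List.mem_append_left _ hb)) (ndleft _ _ (by rw [← hPzx]; exact hndzx))
    have g3 := mkhop z x bzx hxz.symm (hmzx bzx (by rw [hPzx]; exact List.mem_append_right _ (List.mem_singleton_self _)))
    have g4 := mkpairs x y Pxy hxy hxB hyB (fun b' hb => hmxy b' (by rw [hPxy]; exact hb)) (by rw [← hPxy]; exact hndxy)
    have acc1 := g1
    have acc2 := glue _ _ _ _ _ acc1 g2 (subL _ _ sub2) (subR _ _ sub2) nd2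
    have acc3 := glue _ _ _ _ _ acc2 g3 (subL _ _ sub3) (subR _ _ sub3) nd3
    have acc4 := glue _ _ _ _ _ acc3 g4 (subL _ _ sub4) (subR _ _ sub4) nd4
    exact key z x _ hzA hxA acc4 hperm
  · have hperm : ((((labels Pxy ++ labels Pyz) ++ [byz]) ++ labels Pzx)).Perm (Lxy ++ Lyz ++ Lzx) := by
      rw [hPxy, hPyz, hPzx]
      refine Multiset.coe_eq_coe.mp ?_
      simp only [labels_cons, labels_nil, ← Multiset.coe_add, ← Multiset.cons_coe, Multiset.coe_nil, ← Multiset.singleton_add]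
      abel
    have hndbig := hperm.nodup_iff.mpr hndall
    have hsubbig : ∀ b ∈ (((labels Pxy ++ labels Pyz) ++ [byz]) ++ labels Pzx), b ∈ B := fun b hb => hsuball b (hperm.subset hb)
    have nd4 := hndbig
    have nd3 := ndleft _ _ nd4
    have nd2 := ndleft _ _ nd3
    have sub4 := hsubbig
    have sub3 := subL _ _ sub4
    have sub2 := subL _ _ sub3
    have g1 := mkpairs y x Pxy hxy.symm hyB hxB (fun b' hb => let m := hmxy b' (by rw [hPxy]; exact hb); ⟨m.1, m.2.2, m.2.1⟩) (by rw [← hPxy]; exact hndxy)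
    have g2 := mkpairs y z Pyz hyz hyB hzB (fun b' hb => hmyz b' (by rw [hPyz]; exact List.mem_append_left _ hb)) (ndleft _ _ (by rw [← hPyz]; exact hndyz))
    have g3 := mkhop y z byz hyz (hmyz byz (by rw [hPyz]; exact List.mem_append_right _ (List.mem_singleton_self _)))
    have g4 := mkpairs z x Pzx hxz.symm hzB hxB (fun b' hb => hmzx b' (by rw [hPzx]; exact hb)) (by rw [← hPzx]; exact hndzx)
    have acc1 := g1
    have acc2 := glue _ _ _ _ _ acc1 g2 (subL _ _ sub2) (subR _ _ sub2) nd2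
    have acc3 := glue _ _ _ _ _ acc2 g3 (subL _ _ sub3) (subR _ _ sub3) nd3
    have acc4 := glue _ _ _ _ _ acc3 g4 (subL _ _ sub4) (subR _ _ sub4) nd4
    exact key y z _ hyA hzA acc4 hperm
  · have hperm : (((((labels Pyz ++ [byz]) ++ labels Pzx) ++ [bzx]) ++ labels Pxy)).Perm (Lxy ++ Lyz ++ Lzx) := by
      rw [hPxy, hPyz, hPzx]
      refine Multiset.coe_eq_coe.mp ?_
      simp only [labels_cons, labels_nil, ← Multiset.coe_add, ← Multiset.cons_coe, Multiset.coe_nil, ← Multiset.singleton_add]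
      abel
    have hndbig := hperm.nodup_iff.mpr hndall
    have hsubbig : ∀ b ∈ ((((labels Pyz ++ [byz]) ++ labels Pzx) ++ [bzx]) ++ labels Pxy), b ∈ B := fun b hb => hsuball b (hperm.subset hb)
    have nd5 := hndbig
    have nd4 := ndleft _ _ nd5
    have nd3 := ndleft _ _ nd4
    have nd2 := ndleft _ _ nd3
    have sub5 := hsubbig
    have sub4 := subL _ _ sub5
    have sub3 := subL _ _ sub4
    have sub2 := subL _ _ sub3
    have g1 := mkpairs y z Pyz hyz hyB hzB (fun b' hb => hmyz b' (by rw [hPyz]; exact List.mem_append_left _ hb)) (ndleft _ _ (by rw [← hPyz]; exact hndyz))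
    have g2 := mkhop y z byz hyz (hmyz byz (by rw [hPyz]; exact List.mem_append_right _ (List.mem_singleton_self _)))
    have g3 := mkpairs z x Pzx hxz.symm hzB hxB (fun b' hb => hmzx b' (by rw [hPzx]; exact List.mem_append_left _ hb)) (ndleft _ _ (by rw [← hPzx]; exact hndzx))
    have g4 := mkhop z x bzx hxz.symm (hmzx bzx (by rw [hPzx]; exact List.mem_append_right _ (List.mem_singleton_self _)))
    have g5 := mkpairs x y Pxy hxy hxB hyB (fun b' hb => hmxy b' (by rw [hPxy]; exact hb)) (by rw [← hPxy]; exact hndxy)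
    have acc1 := g1
    have acc2 := glue _ _ _ _ _ acc1 g2 (subL _ _ sub2) (subR _ _ sub2) nd2
    have acc3 := glue _ _ _ _ _ acc2 g3 (subL _ _ sub3) (subR _ _ sub3) nd3
    have acc4 := glue _ _ _ _ _ acc3 g4 (subL _ _ sub4) (subR _ _ sub4) nd4
    have acc5 := glue _ _ _ _ _ acc4 g5 (subL _ _ sub5) (subR _ _ sub5) nd5
    exact key y x _ hyA hxA acc5 hperm
  · have hperm : ((((labels Pzx ++ labels Pxy) ++ [bxy]) ++ labels Pyz)).Perm (Lxy ++ Lyz ++ Lzx) := by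
      rw [hPxy, hPyz, hPzx]
      refine Multiset.coe_eq_coe.mp ?_
      simp only [labels_cons, labels_nil, ← Multiset.coe_add, ← Multiset.cons_coe, Multiset.coe_nil, ← Multiset.singleton_add]
      abel
    have hndbig := hperm.nodup_iff.mpr hndall
    have hsubbig : ∀ b ∈ (((labels Pzx ++ labels Pxy) ++ [bxy]) ++ labels Pyz), b ∈ B := fun b hb => hsuball b (hperm.subset hb)
    have nd4 := hndbig
    have nd3 := ndleft _ _ nd4
    have nd2 := ndleft _ _ nd3
    have sub4 := hsubbig
    have sub3 := subL _ _ sub4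
    have sub2 := subL _ _ sub3
    have g1 := mkpairs x z Pzx hxz hxB hzB (fun b' hb => let m := hmzx b' (by rw [hPzx]; exact hb); ⟨m.1, m.2.2, m.2.1⟩) (by rw [← hPzx]; exact hndzx)
    have g2 := mkpairs x y Pxy hxy hxB hyB (fun b' hb => hmxy b' (by rw [hPxy]; exact List.mem_append_left _ hb)) (ndleft _ _ (by rw [← hPxy]; exact hndxy))
    have g3 := mkhop x y bxy hxy (hmxy bxy (by rw [hPxy]; exact List.mem_append_right _ (List.mem_singleton_self _)))
    have g4 := mkpairs y z Pyz hyz hyB hzB (fun b' hb => hmyz b' (by rw [hPyz]; exact hb)) (by rw [← hPyz]; exact hndyz)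
    have acc1 := g1
    have acc2 := glue _ _ _ _ _ acc1 g2 (subL _ _ sub2) (subR _ _ sub2) nd2
    have acc3 := glue _ _ _ _ _ acc2 g3 (subL _ _ sub3) (subR _ _ sub3) nd3
    have acc4 := glue _ _ _ _ _ acc3 g4 (subL _ _ sub4) (subR _ _ sub4) nd4
    exact key x y _ hxA hyA acc4 hperm
  · have hperm : (((((labels Pxy ++ [bxy]) ++ labels Pzx) ++ [bzx]) ++ labels Pyz)).Perm (Lxy ++ Lyz ++ Lzx) := by
      rw [hPxy, hPyz, hPzx]
      refine Multiset.coe_eq_coe.mp ?_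
      simp only [labels_cons, labels_nil, ← Multiset.coe_add, ← Multiset.cons_coe, Multiset.coe_nil, ← Multiset.singleton_add]
      abel
    have hndbig := hperm.nodup_iff.mpr hndall
    have hsubbig : ∀ b ∈ ((((labels Pxy ++ [bxy]) ++ labels Pzx) ++ [bzx]) ++ labels Pyz), b ∈ B := fun b hb => hsuball b (hperm.subset hb)
    have nd5 := hndbig
    have nd4 := ndleft _ _ nd5
    have nd3 := ndleft _ _ nd4
    have nd2 := ndleft _ _ nd3
    have sub5 := hsubbig
    have sub4 := subL _ _ sub5
    have sub3 := subL _ _ sub4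
    have sub2 := subL _ _ sub3
    have g1 := mkpairs y x Pxy hxy.symm hyB hxB (fun b' hb => let m := hmxy b' (by rw [hPxy]; exact List.mem_append_left _ hb); ⟨m.1, m.2.2, m.2.1⟩) (ndleft _ _ (by rw [← hPxy]; exact hndxy))
    have g2 := mkhop y x bxy hxy.symm (let m := hmxy bxy (by rw [hPxy]; exact List.mem_append_right _ (List.mem_singleton_self _)); ⟨m.1, m.2.2, m.2.1⟩)
    have g3 := mkpairs x z Pzx hxz hxB hzB (fun b' hb => let m := hmzx b' (by rw [hPzx]; exact List.mem_append_left _ hb); ⟨m.1, m.2.2, m.2.1⟩) (ndleft _ _ (by rw [← hPzx]; exact hndzx))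
    have g4 := mkhop x z bzx hxz (let m := hmzx bzx (by rw [hPzx]; exact List.mem_append_right _ (List.mem_singleton_self _)); ⟨m.1, m.2.2, m.2.1⟩)
    have g5 := mkpairs z y Pyz hyz.symm hzB hyB (fun b' hb => let m := hmyz b' (by rw [hPyz]; exact hb); ⟨m.1, m.2.2, m.2.1⟩) (by rw [← hPyz]; exact hndyz)
    have acc1 := g1
    have acc2 := glue _ _ _ _ _ acc1 g2 (subL _ _ sub2) (subR _ _ sub2) nd2
    have acc3 := glue _ _ _ _ _ acc2 g3 (subL _ _ sub3) (subR _ _ sub3) nd3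
    have acc4 := glue _ _ _ _ _ acc3 g4 (subL _ _ sub4) (subR _ _ sub4) nd4
    have acc5 := glue _ _ _ _ _ acc4 g5 (subL _ _ sub5) (subR _ _ sub5) nd5
    exact key y z _ hyA hzA acc5 hperm
  · have hperm : (((((labels Pxy ++ [bxy]) ++ labels Pyz) ++ [byz]) ++ labels Pzx)).Perm (Lxy ++ Lyz ++ Lzx) := by
      rw [hPxy, hPyz, hPzx]
      refine Multiset.coe_eq_coe.mp ?_
      simp only [labels_cons, labels_nil, ← Multiset.coe_add, ← Multiset.cons_coe, Multiset.coe_nil, ← Multiset.singleton_add]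
      abel
    have hndbig := hperm.nodup_iff.mpr hndall
    have hsubbig : ∀ b ∈ ((((labels Pxy ++ [bxy]) ++ labels Pyz) ++ [byz]) ++ labels Pzx), b ∈ B := fun b hb => hsuball b (hperm.subset hb)
    have nd5 := hndbig
    have nd4 := ndleft _ _ nd5
    have nd3 := ndleft _ _ nd4
    have nd2 := ndleft _ _ nd3
    have sub5 := hsubbig
    have sub4 := subL _ _ sub5
    have sub3 := subL _ _ sub4
    have sub2 := subL _ _ sub3
    have g1 := mkpairs x y Pxy hxy hxB hyB (fun b' hb => hmxy b' (by rw [hPxy]; exact List.mem_append_left _ hb)) (ndleft _ _ (by rw [← hPxy]; exact hndxy))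
    have g2 := mkhop x y bxy hxy (hmxy bxy (by rw [hPxy]; exact List.mem_append_right _ (List.mem_singleton_self _)))
    have g3 := mkpairs y z Pyz hyz hyB hzB (fun b' hb => hmyz b' (by rw [hPyz]; exact List.mem_append_left _ hb)) (ndleft _ _ (by rw [← hPyz]; exact hndyz))
    have g4 := mkhop y z byz hyz (hmyz byz (by rw [hPyz]; exact List.mem_append_right _ (List.mem_singleton_self _)))
    have g5 := mkpairs z x Pzx hxz.symm hzB hxB (fun b' hb => hmzx b' (by rw [hPzx]; exact hb)) (by rw [← hPzx]; exact hndzx)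
    have acc1 := g1
    have acc2 := glue _ _ _ _ _ acc1 g2 (subL _ _ sub2) (subR _ _ sub2) nd2
    have acc3 := glue _ _ _ _ _ acc2 g3 (subL _ _ sub3) (subR _ _ sub3) nd3
    have acc4 := glue _ _ _ _ _ acc3 g4 (subL _ _ sub4) (subR _ _ sub4) nd4
    have acc5 := glue _ _ _ _ _ acc4 g5 (subL _ _ sub5) (subR _ _ sub5) nd5
    exact key x z _ hxA hzA acc5 hperm
  · have hperm : ((((((labels Pxy ++ [bxy]) ++ labels Pyz) ++ [byz]) ++ labels Pzx) ++ [bzx])).Perm (Lxy ++ Lyz ++ Lzx) := by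
      rw [hPxy, hPyz, hPzx]
      refine Multiset.coe_eq_coe.mp ?_
      simp only [labels_cons, labels_nil, ← Multiset.coe_add, ← Multiset.cons_coe, Multiset.coe_nil, ← Multiset.singleton_add]
      abel
    have hndbig := hperm.nodup_iff.mpr hndall
    have hsubbig : ∀ b ∈ (((((labels Pxy ++ [bxy]) ++ labels Pyz) ++ [byz]) ++ labels Pzx) ++ [bzx]), b ∈ B := fun b hb => hsuball b (hperm.subset hb)
    have nd6 := hndbig
    have nd5 := ndleft _ _ nd6
    have nd4 := ndleft _ _ nd5
    have nd3 := ndleft _ _ nd4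
    have nd2 := ndleft _ _ nd3
    have sub6 := hsubbig
    have sub5 := subL _ _ sub6
    have sub4 := subL _ _ sub5
    have sub3 := subL _ _ sub4
    have sub2 := subL _ _ sub3
    have g1 := mkpairs x y Pxy hxy hxB hyB (fun b' hb => hmxy b' (by rw [hPxy]; exact List.mem_append_left _ hb)) (ndleft _ _ (by rw [← hPxy]; exact hndxy))
    have g2 := mkhop x y bxy hxy (hmxy bxy (by rw [hPxy]; exact List.mem_append_right _ (List.mem_singleton_self _)))
    have g3 := mkpairs y z Pyz hyz hyB hzB (fun b' hb => hmyz b' (by rw [hPyz]; exact List.mem_append_left _ hb)) (ndleft _ _ (by rw [← hPyz]; exact hndyz))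
    have g4 := mkhop y z byz hyz (hmyz byz (by rw [hPyz]; exact List.mem_append_right _ (List.mem_singleton_self _)))
    have g5 := mkpairs z x Pzx hxz.symm hzB hxB (fun b' hb => hmzx b' (by rw [hPzx]; exact List.mem_append_left _ hb)) (ndleft _ _ (by rw [← hPzx]; exact hndzx))
    have g6 := mkhop z x bzx hxz.symm (hmzx bzx (by rw [hPzx]; exact List.mem_append_right _ (List.mem_singleton_self _)))
    have acc1 := g1
    have acc2 := glue _ _ _ _ _ acc1 g2 (subL _ _ sub2) (subR _ _ sub2) nd2
    have acc3 := glue _ _ _ _ _ acc2 g3 (subL _ _ sub3) (subR _ _ sub3) nd3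
    have acc4 := glue _ _ _ _ _ acc3 g4 (subL _ _ sub4) (subR _ _ sub4) nd4
    have acc5 := glue _ _ _ _ _ acc4 g5 (subL _ _ sub5) (subR _ _ sub5) nd5
    have acc6 := glue _ _ _ _ _ acc5 g6 (subL _ _ sub6) (subR _ _ sub6) nd6
    exact key x x _ hxA hxA acc6 hperm
end
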